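/- arXiv:1512.04637 — 5 statements merged into one kernel-verified Lean document; each statement's English description precedes it below -/
import Mathlib

section
/- Emergence of Prices: Let M ∈ 𝔐(m) with extended net-trade function ν. Then there is a unique map p : S₊ → ℝ₊₊^m/∼ (prices, i.e. strictly positive vectors up to positive scaling) satisfying value conservation: p(b)·ν(a,b) = 0 for every a ∈ S and b ∈ S₊. -/
open Finset

/-- An (abstract) exchange mechanism on the commodity set `{1,…,m}` (modelled as `Fin m`):
a finite index set `K = K₁ ⊔ ⋯ ⊔ K_m` (an index `h` belongs to `K_i` iff `ind h = i`),
together with, for every number `n` of traders, a return map `rho n`. -/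
structure ExchangeMechanism (m : ℕ) where
  K : Type
  fintypeK : Fintype K
  decEqK : DecidableEq K
  ind : K → Fin m
  rho : (n : ℕ) → (Fin n → K → ℝ) → Fin n → Fin m → ℝ

namespace ExchangeMechanism

variable {m : ℕ} (M : ExchangeMechanism m)

instance : Fintype M.K := M.fintypeK
instance : DecidableEq M.K := M.decEqK

/-- `a ∈ S = ℝ₊^K`. -/
def Nonneg (a : M.K → ℝ) : Prop := ∀ h, 0 ≤ a h

/-- `b ∈ S₊ = ℝ₊₊^K`. -/
def Pos (b : M.K → ℝ) : Prop := ∀ h, 0 < b h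

/-- `(a¹,…,aⁿ) ∈ S(n)`: an admissible tuple of offers (nonnegative, positive in aggregate). -/
def Valid (n : ℕ) (a : Fin n → M.K → ℝ) : Prop :=
  (∀ k, M.Nonneg (a k)) ∧ M.Pos (∑ k, a k)

/-- The aggregate `ā ∈ C = ℝ₊^m` of an offer `a`, `ā_i = Σ_{h ∈ K_i} a_h`. -/
def agg (a : M.K → ℝ) : Fin m → ℝ :=
  fun i => ∑ h ∈ Finset.univ.filter (fun h => M.ind h = i), a h

/-- Conservation of commodities: everything received is redistributed. -/
def Conserves : Prop :=
  ∀ n (a : Fin n → M.K → ℝ), M.Valid n a →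
    ∑ k, M.rho n a k = ∑ k, M.agg (a k)

/-- Anonymity. -/
def Anonymous : Prop :=
  ∀ n (a : Fin n → M.K → ℝ) (σ : Equiv.Perm (Fin n)), M.Valid n a →
    M.rho n (a ∘ σ) = (M.rho n a) ∘ σ

/-- Aggregation: merging the last two offers merges the last two returns. -/
def Aggregative : Prop :=
  ∀ n (a : Fin (n + 2) → M.K → ℝ), M.Valid (n + 2) a →
    M.rho (n + 1)
      (Fin.snoc (fun k : Fin n => a k.castSucc.castSucc)
        (a (Fin.castSucc (Fin.last n)) + a (Fin.last (n + 1)))) =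
      Fin.snoc (fun k : Fin n => M.rho (n + 2) a k.castSucc.castSucc)
        (M.rho (n + 2) a (Fin.castSucc (Fin.last n)) + M.rho (n + 2) a (Fin.last (n + 1)))

/-- The scaling action `(λ ∗ a)_h = λ_{i} a_h` for `h ∈ K_i` on offers. -/
def scaleS (lam : Fin m → ℝ) (a : M.K → ℝ) : M.K → ℝ := fun h => lam (M.ind h) * a h

/-- Invariance under change of units. -/
def Invariant : Prop :=
  ∀ n (a : Fin n → M.K → ℝ) (lam : Fin m → ℝ), (∀ i, 0 < lam i) → M.Valid n a →
    M.rho n (fun k => M.scaleS lam (a k)) = fun k i => lam i * M.rho n a k i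

/-- Non-dissipation: each net return `rᵏ − āᵏ` is `0` or has a strictly positive component. -/
def NonDissipative : Prop :=
  ∀ n (a : Fin n → M.K → ℝ), M.Valid n a → ∀ k,
    M.rho n a k = M.agg (a k) ∨ ∃ i, M.agg (a k) i < M.rho n a k i

/-- The two-trader return `ρ(a, b)`: the first component of `ρ²`. -/
def ret (a b : M.K → ℝ) : Fin m → ℝ := M.rho 2 ![a, b] 0

/-- The unit offer `e_h`. -/
def unit (h : M.K) : M.K → ℝ := Pi.single h 1

/-- `h ∈ K_i` is an `ij`-index: some offer of the others yields a positive return of `j`. -/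
def IsIJIndex (i j : Fin m) (h : M.K) : Prop :=
  M.ind h = i ∧ ∃ a, M.Valid 2 ![M.unit h, a] ∧ 0 < M.ret (M.unit h) a j

/-- A pure `ij`-index: the return to `e_h` is always exclusively in commodity `j`. -/
def IsPureIJIndex (i j : Fin m) (h : M.K) : Prop :=
  M.IsIJIndex i j h ∧
    ∀ a, M.Valid 2 ![M.unit h, a] → ∀ k, k ≠ j → M.ret (M.unit h) a k = 0

/-- Flexibility: whenever there is an `ij`-index there is a pure `ij`-index. -/
def Flexible : Prop :=
  ∀ i j : Fin m, (∃ h, M.IsIJIndex i j h) → ∃ h, M.IsPureIJIndex i j h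

/-- The trade function `r(a,b) = ρ(a, b − a)` (for `a ≤ b`, `b ∈ S₊`). -/
def trade (a b : M.K → ℝ) : Fin m → ℝ := M.ret a (b - a)

/-- The net-trade function `ν(a,b) = r(a,b) − ā` (for `a ≤ b`, `b ∈ S₊`). -/
def nu (a b : M.K → ℝ) : Fin m → ℝ := M.trade a b - M.agg a

/-- `nu'` is an extension of the net-trade function `ν` to all of `S × S₊` which is
homogeneous of degree 1 in the offer and of degree 0 in the market state. -/
def IsNuExtension (nu' : (M.K → ℝ) → (M.K → ℝ) → Fin m → ℝ) : Prop :=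
  (∀ a b, M.Nonneg a → M.Pos b → a ≤ b → nu' a b = M.nu a b) ∧
  (∀ a b (t : ℝ), M.Nonneg a → M.Pos b → 0 < t → nu' (t • a) b = t • nu' a b) ∧
  (∀ a b (t : ℝ), M.Nonneg a → M.Pos b → 0 < t → nu' a (t • b) = nu' a b)


/-- `v → w`: the bundle `v` can be converted to `w` (relative to the extended
net-trade function `nu'`). -/
def Converts (nu' : (M.K → ℝ) → (M.K → ℝ) → Fin m → ℝ) (v w : Fin m → ℝ) : Prop :=
  ∃ a b, M.Nonneg a ∧ M.Pos b ∧ M.agg a ≤ v ∧ w = v + nu' a b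

/-- `v` can be converted to `w` in exactly `t` steps. -/
def ConvertsIn (nu' : (M.K → ℝ) → (M.K → ℝ) → Fin m → ℝ) (t : ℕ)
    (v w : Fin m → ℝ) : Prop :=
  ∃ f : Fin (t + 1) → Fin m → ℝ, f 0 = v ∧ f (Fin.last t) = w ∧
    ∀ k : Fin t, M.Converts nu' (f k.castSucc) (f k.succ)

/-- Connectedness: each `e_i` converts to each `e_j` in finitely many steps,
i.e. `τ(M) < ∞`. -/
def Connected (nu' : (M.K → ℝ) → (M.K → ℝ) → Fin m → ℝ) : Prop :=
  ∀ i j : Fin m, i ≠ j →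
    ∃ t : ℕ, M.ConvertsIn nu' t (Pi.single i 1) (Pi.single j 1)

/-- `M ∈ 𝔐(m)` (relative to a chosen extension `nu'` of its net-trade function):
`M` is connected and satisfies Anonymity, Aggregation, Invariance, Non-dissipation
and Flexibility. -/
def MemM (nu' : (M.K → ℝ) → (M.K → ℝ) → Fin m → ℝ) : Prop :=
  M.Conserves ∧ M.Anonymous ∧ M.Aggregative ∧ M.Invariant ∧ M.NonDissipative ∧
    M.Flexible ∧ M.IsNuExtension nu' ∧ M.Connected nu'

end ExchangeMechanism


namespace ExchangeMechanism

variable {m : ℕ} {M : ExchangeMechanism m}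

/-! ### Basic lemmas about `agg` and validity -/

lemma agg_add' (x y : M.K → ℝ) : M.agg (x + y) = M.agg x + M.agg y := by
  funext i
  simp [agg, Finset.sum_add_distrib]

lemma agg_zero' : M.agg 0 = 0 := by
  funext i; simp [agg]

lemma agg_smul' (t : ℝ) (x : M.K → ℝ) : M.agg (t • x) = t • M.agg x := by
  funext i
  simp [agg, Finset.mul_sum]

lemma agg_nonneg' {x : M.K → ℝ} (hx : M.Nonneg x) (i : Fin m) : 0 ≤ M.agg x i :=
  Finset.sum_nonneg fun h _ => hx h

lemma agg_single (h : M.K) (c : ℝ) : M.agg (Pi.single h c) = Pi.single (M.ind h) c := by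
  funext i
  classical
  simp only [agg, Pi.single_apply]
  rw [Finset.sum_ite_eq' (Finset.univ.filter (fun h' => M.ind h' = i)) h (fun _ => c)]
  by_cases hi : M.ind h = i <;> simp [hi, eq_comm]

lemma le_term_agg {a : M.K → ℝ} (ha : M.Nonneg a) (h : M.K) :
    a h ≤ M.agg a (M.ind h) := by
  classical
  apply Finset.single_le_sum (f := a) (fun h' _ => ha h')
  simp

lemma valid_two {x y : M.K → ℝ} (hx : M.Nonneg x) (hy : M.Nonneg y)
    (hxy : M.Pos (x + y)) : M.Valid 2 ![x, y] := by
  constructor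
  · intro k; fin_cases k <;> simpa
  · rw [Fin.sum_univ_two]; simpa using hxy

lemma valid_three {x y z : M.K → ℝ} (hx : M.Nonneg x) (hy : M.Nonneg y) (hz : M.Nonneg z)
    (hxyz : M.Pos (x + y + z)) : M.Valid 3 ![x, y, z] := by
  constructor
  · intro k; fin_cases k <;> simpa
  · rw [Fin.sum_univ_three]; simpa using hxyz

/-! ### Consequences of anonymity, conservation and aggregation -/

lemma rho_comp (hA : M.Anonymous) {n : ℕ} {u w : Fin n → M.K → ℝ}
    (σ : Equiv.Perm (Fin n)) (hu : M.Valid n u) (hw : u ∘ σ = w) (k : Fin n) :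
    M.rho n w k = M.rho n u (σ k) := by
  have := hA n u σ hu
  rw [hw] at this
  exact congrFun this k

lemma conserve_two (hC : M.Conserves) {x y : M.K → ℝ} (hv : M.Valid 2 ![x, y]) :
    M.rho 2 ![x, y] 0 + M.rho 2 ![x, y] 1 = M.agg x + M.agg y := by
  have := hC 2 ![x, y] hv
  simpa [Fin.sum_univ_two] using this

lemma rho_swap (hA : M.Anonymous) {x y : M.K → ℝ} (hv : M.Valid 2 ![y, x]) :
    M.rho 2 ![x, y] 0 = M.rho 2 ![y, x] 1 := by
  have hcomp : ![y, x] ∘ (Equiv.swap (0 : Fin 2) 1) = ![x, y] := by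
    funext k; fin_cases k <;>
      simp [Equiv.swap_apply_left, Equiv.swap_apply_right]
  have := rho_comp hA (Equiv.swap (0 : Fin 2) 1) hv hcomp 0
  simpa using this

lemma agg3 (hG : M.Aggregative) {x y z : M.K → ℝ} (hv : M.Valid 3 ![x, y, z]) :
    M.rho 2 ![x, y + z] 0 = M.rho 3 ![x, y, z] 0 ∧
      M.rho 2 ![x, y + z] 1 = M.rho 3 ![x, y, z] 1 + M.rho 3 ![x, y, z] 2 := by
  have H := hG 1 ![x, y, z] hv
  have e1 : (Fin.snoc (fun k : Fin 1 => ![x, y, z] k.castSucc.castSucc)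
      (![x, y, z] (Fin.castSucc (Fin.last 1)) + ![x, y, z] (Fin.last 2)) :
        Fin 2 → M.K → ℝ) = ![x, y + z] := by
    funext k
    refine Fin.lastCases ?_ ?_ k
    · rw [Fin.snoc_last]; rfl
    · intro i
      rw [Fin.snoc_castSucc]
      have : i = 0 := Subsingleton.elim _ _
      subst this; rfl
  rw [e1] at H
  constructor
  · have := congrFun H 0
    rwa [show (0 : Fin 2) = Fin.castSucc 0 from rfl, Fin.snoc_castSucc] at this
  · have := congrFun H 1
    rwa [show (1 : Fin 2) = Fin.last 1 from rfl, Fin.snoc_last] at this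

/-! ### Additivity of the net trade -/

lemma nu_def (a b : M.K → ℝ) : M.nu a b = M.rho 2 ![a, b - a] 0 - M.agg a := rfl

lemma nu_add (hC : M.Conserves) (hA : M.Anonymous) (hG : M.Aggregative)
    {a a' b : M.K → ℝ} (ha : M.Nonneg a) (ha' : M.Nonneg a') (hb : M.Pos b)
    (hab : a + a' ≤ b) :
    M.nu (a + a') b = M.nu a b + M.nu a' b := by
  classical
  set z : M.K → ℝ := b - (a + a') with hz
  have hznn : M.Nonneg z := by
    intro h
    have := hab h
    simp only [hz, Pi.sub_apply]
    linarith [this]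
  have hsum : a + a' + z = b := by
    funext h; simp [hz]
  have hv3 : M.Valid 3 ![a, a', z] :=
    valid_three ha ha' hznn (by rw [hsum]; exact hb)
  set T := M.rho 3 ![a, a', z] with hT
  -- (A) trade a b = T 0
  have hA1 : M.rho 2 ![a, b - a] 0 = T 0 := by
    have := (agg3 hG hv3).1
    have e : a' + z = b - a := by funext h; simp [hz]; ring
    rw [e] at this
    exact this
  -- (B) trade a' b = T 1
  have hv3' : M.Valid 3 ![a', a, z] :=
    valid_three ha' ha hznn (by
      have : a' + a + z = b := by funext h; simp [hz]; ring
      rw [this]; exact hb)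
  have hcompB : ![a, a', z] ∘ (Equiv.swap (0 : Fin 3) 1) = ![a', a, z] := by
    funext k; fin_cases k <;>
      simp [Equiv.swap_apply_left, Equiv.swap_apply_right, Equiv.swap_apply_of_ne_of_ne,
        Fin.ext_iff]
  have hB0 : ∀ k, M.rho 3 ![a', a, z] k = T (Equiv.swap (0 : Fin 3) 1 k) := fun k =>
    rho_comp hA _ hv3 hcompB k
  have hB1 : M.rho 2 ![a', b - a'] 0 = T 1 := by
    have := (agg3 hG hv3').1
    have e : a + z = b - a' := by funext h; simp [hz]; ring
    rw [e] at this
    rw [this, hB0 0]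
    norm_num
  -- (C) trade (a+a') b = T 0 + T 1
  have hv3'' : M.Valid 3 ![z, a, a'] :=
    valid_three hznn ha ha' (by
      have : z + a + a' = b := by funext h; simp [hz]; ring
      rw [this]; exact hb)
  have hcompC : ![a, a', z] ∘ ((Equiv.swap (0 : Fin 3) 2) * (Equiv.swap (1 : Fin 3) 2)) =
      ![z, a, a'] := by
    funext k; fin_cases k <;>
      simp [Function.comp, Equiv.Perm.mul_apply, Equiv.swap_apply_left, Equiv.swap_apply_right,
        Equiv.swap_apply_of_ne_of_ne, Fin.ext_iff]
  have hC0 : ∀ k, M.rho 3 ![z, a, a'] k =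
      T (((Equiv.swap (0 : Fin 3) 2) * (Equiv.swap (1 : Fin 3) 2)) k) := fun k =>
    rho_comp hA _ hv3 hcompC k
  have hC1 : M.rho 2 ![z, a + a'] 1 = T 0 + T 1 := by
    have := (agg3 hG hv3'').2
    rw [this, hC0 1, hC0 2]
    have e1 : ((Equiv.swap (0 : Fin 3) 2) * (Equiv.swap (1 : Fin 3) 2)) 1 = 0 := by decide
    have e2 : ((Equiv.swap (0 : Fin 3) 2) * (Equiv.swap (1 : Fin 3) 2)) 2 = 1 := by decide
    rw [e1, e2]
  have hvz : M.Valid 2 ![z, a + a'] := by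
    refine valid_two hznn (fun h => add_nonneg (ha h) (ha' h)) ?_
    have : z + (a + a') = b := by funext h; simp [hz]
    rw [this]; exact hb
  have hC2 : M.rho 2 ![a + a', z] 0 = T 0 + T 1 := by
    rw [rho_swap hA hvz]; exact hC1
  have hzz : z = b - (a + a') := rfl
  rw [nu_def, nu_def, nu_def, ← hzz, hC2, hA1, hB1, agg_add']
  ring

/-! ### `ν(0,b) = 0` and `ν(b,b) = 0` -/

lemma nu_zero (hC : M.Conserves) (hA : M.Anonymous) (hG : M.Aggregative)
    {b : M.K → ℝ} (hb : M.Pos b) : M.nu 0 b = 0 := by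
  have h0 : M.Nonneg (0 : M.K → ℝ) := fun h => le_refl 0
  have H := nu_add hC hA hG h0 h0 hb (by
    intro h; simp; exact le_of_lt (hb h))
  have e : (0 : M.K → ℝ) + 0 = 0 := by simp
  rw [e] at H
  funext i
  have := congrFun H i
  simp only [Pi.add_apply] at this
  simpa using this.symm

lemma nu_self (hC : M.Conserves) (hA : M.Anonymous) (hG : M.Aggregative)
    {b : M.K → ℝ} (hb : M.Pos b) : M.nu b b = 0 := by
  have hbnn : M.Nonneg b := fun h => le_of_lt (hb h)
  have h0 : M.Nonneg (0 : M.K → ℝ) := fun h => le_refl 0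
  have hbb : b - b = (0 : M.K → ℝ) := by simp
  have hv : M.Valid 2 ![b, 0] := valid_two hbnn h0 (by simpa using hb)
  have hv' : M.Valid 2 ![(0 : M.K → ℝ), b] := valid_two h0 hbnn (by simpa using hb)
  have hcons := conserve_two hC hv
  have hswap : M.rho 2 ![(0 : M.K → ℝ), b] 0 = M.rho 2 ![b, 0] 1 := rho_swap hA hv
  -- ρ(0, b)₀ = 0  since ν(0,b) = 0
  have hz : M.rho 2 ![(0 : M.K → ℝ), b] 0 = 0 := by
    have := nu_zero hC hA hG hb
    rw [nu_def] at this
    have e : b - 0 = b := by simp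
    rw [e, agg_zero'] at this
    simpa using this
  have : M.rho 2 ![b, 0] 0 = M.agg b := by
    have h1 : M.rho 2 ![b, 0] 1 = 0 := by rw [← hswap, hz]
    rw [h1] at hcons
    rw [agg_zero'] at hcons
    simpa using hcons
  rw [nu_def, hbb, this]
  simp

section Extension

variable {nu' : (M.K → ℝ) → (M.K → ℝ) → Fin m → ℝ}

lemma exists_scale {a b : M.K → ℝ} (ha : M.Nonneg a) (hb : M.Pos b) :
    ∃ t : ℝ, 0 < t ∧ ∀ h, t * a h ≤ b h := by
  classical
  by_cases hK : Nonempty M.K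
  · obtain ⟨h₀, -, hmin⟩ := Finset.exists_min_image Finset.univ
      (fun h => b h / (a h + 1)) (Finset.univ_nonempty)
    refine ⟨min 1 (b h₀ / (a h₀ + 1)), ?_, ?_⟩
    · exact lt_min one_pos (div_pos (hb h₀) (by linarith [ha h₀]))
    · intro h
      have h1 : (0:ℝ) < a h + 1 := by linarith [ha h]
      have h2 : min 1 (b h₀ / (a h₀ + 1)) ≤ b h / (a h + 1) :=
        le_trans (min_le_right _ _) (hmin h (Finset.mem_univ h))
      have h3 : min 1 (b h₀ / (a h₀ + 1)) * (a h + 1) ≤ b h := by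
        rw [← le_div_iff₀ h1]; exact h2
      have h4 : (0:ℝ) < min 1 (b h₀ / (a h₀ + 1)) :=
        lt_min one_pos (div_pos (hb h₀) (by linarith [ha h₀]))
      nlinarith [ha h]
  · exact ⟨1, one_pos, fun h => absurd ⟨h⟩ hK⟩

lemma smul_nonneg' {a : M.K → ℝ} (ha : M.Nonneg a) {t : ℝ} (ht : 0 ≤ t) :
    M.Nonneg (t • a) := fun h => mul_nonneg ht (ha h)

lemma nu'_zero (hC : M.Conserves) (hA : M.Anonymous) (hG : M.Aggregative)
    (hE : M.IsNuExtension nu') {b : M.K → ℝ} (hb : M.Pos b) : nu' 0 b = 0 := by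
  have h0 : M.Nonneg (0 : M.K → ℝ) := fun h => le_refl 0
  rw [hE.1 0 b h0 hb (fun h => le_of_lt (hb h))]
  exact nu_zero hC hA hG hb

lemma nu'_add (hC : M.Conserves) (hA : M.Anonymous) (hG : M.Aggregative)
    (hE : M.IsNuExtension nu') {a a' b : M.K → ℝ}
    (ha : M.Nonneg a) (ha' : M.Nonneg a') (hb : M.Pos b) :
    nu' (a + a') b = nu' a b + nu' a' b := by
  obtain ⟨t, ht, hta⟩ := exists_scale (fun h => add_nonneg (ha h) (ha' h)) hb
  have haa' : M.Nonneg (a + a') := fun h => add_nonneg (ha h) (ha' h)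
  have h1 : t • (a + a') = t • a + t • a' := smul_add t a a'
  have hle : t • (a + a') ≤ b := by
    intro h; exact hta h
  have hlea : t • a ≤ b := by
    intro h
    have := hta h
    have : t * a h ≤ t * (a h + a' h) := by nlinarith [ha' h]
    calc (t • a) h = t * a h := rfl
    _ ≤ t * (a h + a' h) := this
    _ ≤ b h := hta h
  have hlea' : t • a' ≤ b := by
    intro h
    have : t * a' h ≤ t * (a h + a' h) := by nlinarith [ha h]
    calc (t • a') h = t * a' h := rfl
    _ ≤ t * (a h + a' h) := this
    _ ≤ b h := hta h
  have key : t • nu' (a + a') b = t • (nu' a b + nu' a' b) := by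
    calc t • nu' (a + a') b = nu' (t • (a + a')) b := (hE.2.1 _ b t haa' hb ht).symm
    _ = M.nu (t • (a + a')) b := hE.1 _ b (smul_nonneg' haa' (le_of_lt ht)) hb hle
    _ = M.nu (t • a + t • a') b := by rw [h1]
    _ = M.nu (t • a) b + M.nu (t • a') b :=
        nu_add hC hA hG (smul_nonneg' ha (le_of_lt ht)) (smul_nonneg' ha' (le_of_lt ht)) hb
          (by rw [← h1]; exact hle)
    _ = nu' (t • a) b + nu' (t • a') b := by
        rw [← hE.1 _ b (smul_nonneg' ha (le_of_lt ht)) hb hlea,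
          ← hE.1 _ b (smul_nonneg' ha' (le_of_lt ht)) hb hlea']
    _ = t • nu' a b + t • nu' a' b := by
        rw [hE.2.1 a b t ha hb ht, hE.2.1 a' b t ha' hb ht]
    _ = t • (nu' a b + nu' a' b) := (smul_add t _ _).symm
  exact smul_right_injective _ (ne_of_gt ht) key

lemma nu'_smul (hC : M.Conserves) (hA : M.Anonymous) (hG : M.Aggregative)
    (hE : M.IsNuExtension nu') {a b : M.K → ℝ} (ha : M.Nonneg a) (hb : M.Pos b)
    {c : ℝ} (hc : 0 ≤ c) : nu' (c • a) b = c • nu' a b := by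
  rcases lt_or_eq_of_le hc with hc' | hc'
  · exact hE.2.1 a b c ha hb hc'
  · rw [← hc']
    simp only [zero_smul]
    exact nu'_zero hC hA hG hE hb

lemma single_nonneg' (h : M.K) {c : ℝ} (hc : 0 ≤ c) : M.Nonneg (Pi.single h c) := by
  intro h'
  classical
  rcases eq_or_ne h' h with rfl | hne
  · simpa using hc
  · simp [Pi.single_apply, hne]

lemma single_eq_smul (h : M.K) (c : ℝ) :
    (Pi.single h c : M.K → ℝ) = c • (Pi.single h 1 : M.K → ℝ) := by
  funext h'
  classical
  simp [Pi.single_apply, mul_ite]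

lemma nu'_decomp (hC : M.Conserves) (hA : M.Anonymous) (hG : M.Aggregative)
    (hE : M.IsNuExtension nu') {a b : M.K → ℝ} (ha : M.Nonneg a) (hb : M.Pos b) :
    nu' a b = ∑ h, a h • nu' (Pi.single h 1) b := by
  classical
  have main : ∀ s : Finset M.K,
      nu' (∑ h ∈ s, Pi.single h (a h)) b = ∑ h ∈ s, a h • nu' (Pi.single h 1) b := by
    intro s
    induction s using Finset.induction with
    | empty => simpa using nu'_zero hC hA hG hE hb
    | insert h₀ s hns ih =>
      rw [Finset.sum_insert hns, Finset.sum_insert hns]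
      have hsingle : M.Nonneg (Pi.single h₀ (a h₀)) := single_nonneg' h₀ (ha h₀)
      have hsum : M.Nonneg (∑ h ∈ s, Pi.single h (a h)) := by
        intro h'
        have : (∑ h ∈ s, Pi.single h (a h)) h' = ∑ h ∈ s, Pi.single h (a h) h' := by
          simp
        rw [this]
        exact Finset.sum_nonneg fun h _ => single_nonneg' h (ha h) h'
      rw [nu'_add hC hA hG hE hsingle hsum hb, ih]
      congr 1
      rw [single_eq_smul h₀ (a h₀)]
      exact nu'_smul hC hA hG hE (single_nonneg' h₀ zero_le_one) hb (ha h₀)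
  have := main Finset.univ
  rwa [Finset.univ_sum_single] at this

end Extension

section NonDissipation

variable {nu' : (M.K → ℝ) → (M.K → ℝ) → Fin m → ℝ}

lemma valid_sub {a b : M.K → ℝ} (ha : M.Nonneg a) (hab : a ≤ b) (hb : M.Pos b) :
    M.Valid 2 ![a, b - a] := by
  refine valid_two ha (fun h => by simpa using hab h) ?_
  have : a + (b - a) = b := by funext h; simp
  rw [this]; exact hb

/-- If `ν'(a,b) ≠ 0` then it has a strictly positive component. -/
lemma nu'_pos_comp (hND : M.NonDissipative) (hE : M.IsNuExtension nu')
    {a b : M.K → ℝ} (ha : M.Nonneg a) (hb : M.Pos b) (hne : nu' a b ≠ 0) :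
    ∃ k, 0 < nu' a b k := by
  obtain ⟨t, ht, hta⟩ := exists_scale ha hb
  have htann : M.Nonneg (t • a) := smul_nonneg' ha (le_of_lt ht)
  have hle : t • a ≤ b := fun h => hta h
  have hv : M.Valid 2 ![t • a, b - t • a] := valid_sub htann hle hb
  have hkey : M.nu (t • a) b = t • nu' a b := by
    rw [← hE.2.1 a b t ha hb ht, hE.1 _ b htann hb hle]
  have hnd := hND 2 ![t • a, b - t • a] hv 0
  simp only [Matrix.cons_val_zero] at hnd
  rcases hnd with h0 | ⟨i, hi⟩
  · exfalso
    apply hne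
    have : M.nu (t • a) b = 0 := by
      rw [nu_def]; rw [h0]; simp
    rw [hkey] at this
    exact smul_right_injective _ (ne_of_gt ht) (by simpa using this)
  · refine ⟨i, ?_⟩
    have : 0 < M.nu (t • a) b i := by
      rw [nu_def]; simp only [Pi.sub_apply]; linarith
    rw [hkey] at this
    simp only [Pi.smul_apply, smul_eq_mul] at this
    nlinarith

/-- If `ν'(a,b) ≥ 0` then it is `0`. -/
lemma nu'_nonneg_zero (hC : M.Conserves) (hND : M.NonDissipative) (hE : M.IsNuExtension nu')
    {a b : M.K → ℝ} (ha : M.Nonneg a) (hb : M.Pos b) (hge : ∀ k, 0 ≤ nu' a b k) :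
    nu' a b = 0 := by
  obtain ⟨t, ht, hta⟩ := exists_scale ha hb
  have htann : M.Nonneg (t • a) := smul_nonneg' ha (le_of_lt ht)
  have hle : t • a ≤ b := fun h => hta h
  have hv : M.Valid 2 ![t • a, b - t • a] := valid_sub htann hle hb
  have hkey : M.nu (t • a) b = t • nu' a b := by
    rw [← hE.2.1 a b t ha hb ht, hE.1 _ b htann hb hle]
  have hcons := conserve_two hC hv
  have hnd := hND 2 ![t • a, b - t • a] hv 1
  simp only [Matrix.cons_val_one, Matrix.head_cons] at hnd
  rcases hnd with h0 | ⟨i, hi⟩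
  · -- second trader's net is zero, hence so is the first's
    have : M.nu (t • a) b = 0 := by
      rw [nu_def]
      rw [h0] at hcons
      have : M.rho 2 ![t • a, b - t • a] 0 = M.agg (t • a) :=
        add_right_cancel hcons
      rw [this]; simp
    rw [hkey] at this
    funext k
    have := congrFun this k
    simp only [Pi.smul_apply, smul_eq_mul, Pi.zero_apply] at this ⊢
    rcases mul_eq_zero.mp this with h | h
    · exact absurd h (ne_of_gt ht)
    · exact h
  · -- second trader's net has a positive component, but it equals -ν(ta,b) ≤ 0
    exfalso
    have hrho1 : M.rho 2 ![t • a, b - t • a] 1 - M.agg (b - t • a) =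
        -(M.nu (t • a) b) := by
      rw [nu_def]
      have := hcons
      funext j
      have hj := congrFun this j
      simp only [Pi.add_apply, Pi.sub_apply, Pi.neg_apply] at hj ⊢
      linarith
    have h1 : 0 < M.rho 2 ![t • a, b - t • a] 1 i - M.agg (b - t • a) i := by
      simp only [Matrix.cons_val_zero] at hi; linarith
    have h2 : M.rho 2 ![t • a, b - t • a] 1 i - M.agg (b - t • a) i =
        -(M.nu (t • a) b i) := by
      have := congrFun hrho1 i
      simpa using this
    rw [h2, hkey] at h1
    simp only [Pi.smul_apply, smul_eq_mul] at h1
    nlinarith [hge i]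

end NonDissipation

section Repr

variable {nu' : (M.K → ℝ) → (M.K → ℝ) → Fin m → ℝ}

/-- Representation of the elementary net trade `ν'(e_h, b)` via the two-trader return map. -/
lemma N_repr (hInv : M.Invariant) (hE : M.IsNuExtension nu')
    (h : M.K) {b : M.K → ℝ} (hb : M.Pos b) :
    ∃ a', M.Valid 2 ![M.unit h, a'] ∧
      nu' (Pi.single h 1) b = M.ret (M.unit h) a' - Pi.single (M.ind h) 1 := by
  classical
  have hs0 : 0 < b h := hb h
  have hsne : b h ≠ 0 := ne_of_gt hs0
  set u : M.K → ℝ := Pi.single h 1 with hu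
  have huu : M.unit h = u := rfl
  have hunn : M.Nonneg u := single_nonneg' h zero_le_one
  set a' : M.K → ℝ := (b h)⁻¹ • b - u with ha'
  have ha'app : ∀ h', a' h' = (b h)⁻¹ * b h' - u h' := fun h' => rfl
  have huapp : ∀ h', u h' = if h' = h then 1 else 0 := fun h' => Pi.single_apply h (1:ℝ) h'
  have ha'nn : M.Nonneg a' := by
    intro h'
    rw [ha'app h', huapp h']
    rcases eq_or_ne h' h with rfl | hne
    · rw [if_pos rfl, inv_mul_cancel₀ hsne]; norm_num
    · rw [if_neg hne]
      have : 0 < (b h)⁻¹ * b h' := mul_pos (inv_pos.mpr hs0) (hb h')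
      linarith
  have hsum : u + a' = (b h)⁻¹ • b := by funext h'; simp [ha']
  have hv : M.Valid 2 ![u, a'] := by
    refine valid_two hunn ha'nn ?_
    rw [hsum]
    intro h'
    exact mul_pos (inv_pos.mpr hs0) (hb h')
  have hsu : b h • u ≤ b := by
    intro h'
    have : (b h • u) h' = b h * (if h' = h then 1 else 0) := by
      rw [← huapp h']; rfl
    rw [this]
    rcases eq_or_ne h' h with rfl | hne
    · rw [if_pos rfl]; norm_num
    · rw [if_neg hne]
      have := hb h'
      linarith
  have hsunn : M.Nonneg (b h • u) := smul_nonneg' hunn (le_of_lt hs0)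
  -- invariance with the constant scaling `b h`
  have hinv := hInv 2 ![u, a'] (fun _ => b h) (fun _ => hs0) hv
  have htuple : (fun k => M.scaleS (fun _ => b h) (![u, a'] k)) = ![b h • u, b - b h • u] := by
    funext k
    fin_cases k
    · funext h'; simp [scaleS]
    · funext h'
      show b h * a' h' = (b - b h • u) h'
      rw [ha'app h']
      have : (b - b h • u) h' = b h' - b h * u h' := rfl
      rw [this]
      field_simp
  rw [htuple] at hinv
  have hret : M.rho 2 ![b h • u, b - b h • u] 0 = b h • M.ret u a' := by
    have := congrFun hinv 0
    rw [this]
    funext i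
    simp [ret]
  have h1 : nu' (b h • u) b = M.nu (b h • u) b := hE.1 _ b hsunn hb hsu
  have h2 : nu' (b h • u) b = b h • nu' u b := hE.2.1 u b (b h) hunn hb hs0
  have hmain : nu' u b = (b h)⁻¹ • M.nu (b h • u) b := by
    rw [← h1, h2, inv_smul_smul₀ hsne]
  refine ⟨a', by rw [huu]; exact hv, ?_⟩
  rw [hmain, nu_def, hret]
  have haggu : M.agg (b h • u) = b h • (Pi.single (M.ind h) 1 : Fin m → ℝ) := by
    rw [agg_smul', hu, agg_single]
  rw [haggu, huu, ← smul_sub, inv_smul_smul₀ hsne]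


/-- A strictly positive off-diagonal component of `ν'(e_h,b)` witnesses an `ij`-index. -/
lemma index_of_pos (hInv : M.Invariant) (hE : M.IsNuExtension nu')
    {h : M.K} {b : M.K → ℝ} (hb : M.Pos b) {k : Fin m} (hk : k ≠ M.ind h)
    (hpos : 0 < nu' (Pi.single h 1) b k) : M.IsIJIndex (M.ind h) k h := by
  obtain ⟨a', hv, hrepr⟩ := N_repr hInv hE h hb
  refine ⟨rfl, a', hv, ?_⟩
  have := congrFun hrepr k
  rw [this] at hpos
  simp only [Pi.sub_apply, Pi.single_apply, if_neg hk, sub_zero] at hpos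
  exact hpos

/-- The net trade of a pure `ij`-index, `i ≠ j`, is `-e_i + c e_j` with `c > 0`. -/
lemma pure_repr (hInv : M.Invariant) (hND : M.NonDissipative) (hE : M.IsNuExtension nu')
    {i j : Fin m} (hij : i ≠ j) {h : M.K} (hp : M.IsPureIJIndex i j h)
    {b : M.K → ℝ} (hb : M.Pos b) :
    ∃ c : ℝ, 0 < c ∧
      nu' (Pi.single h 1) b = c • (Pi.single j 1 : Fin m → ℝ) - Pi.single i 1 := by
  classical
  have hind : M.ind h = i := hp.1.1
  obtain ⟨a', hv, hrepr⟩ := N_repr hInv hE h hb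
  rw [hind] at hrepr
  have hzero : ∀ k, k ≠ j → M.ret (M.unit h) a' k = 0 := fun k hk => hp.2 a' hv k hk
  set c : ℝ := M.ret (M.unit h) a' j with hc
  have hform : nu' (Pi.single h 1) b = c • (Pi.single j 1 : Fin m → ℝ) - Pi.single i 1 := by
    funext k
    have hk := congrFun hrepr k
    rw [hk]
    rcases eq_or_ne k j with rfl | hkj
    · simp [Pi.single_apply, Ne.symm hij, hc]
    · have h1 : (M.ret (M.unit h) a' - (Pi.single i 1 : Fin m → ℝ)) k
          = M.ret (M.unit h) a' k - (Pi.single i 1 : Fin m → ℝ) k := rfl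
      rw [h1, hzero k hkj]
      simp [Pi.single_apply, hkj]
  refine ⟨c, ?_, hform⟩
  have hne : nu' (Pi.single h 1) b ≠ 0 := by
    intro h0
    have := congrFun hform i
    rw [h0] at this
    simp [Pi.single_apply, Ne.symm hij] at this
  obtain ⟨k, hkpos⟩ := nu'_pos_comp hND hE (single_nonneg' h zero_le_one) hb hne
  have hk := congrFun hform k
  rw [hk] at hkpos
  rcases eq_or_ne k j with rfl | hkj
  · simpa [Pi.single_apply, Ne.symm hij] using hkpos
  · exfalso
    rcases eq_or_ne k i with rfl | hki
    · simp [Pi.single_apply, hkj] at hkpos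
      linarith
    · simp [Pi.single_apply, hkj, hki] at hkpos

/-- The zero-sum identity `∑_h b_h ν'(e_h, b) = 0`. -/
lemma sum_b_nu' (hC : M.Conserves) (hA : M.Anonymous) (hG : M.Aggregative)
    (hE : M.IsNuExtension nu') {b : M.K → ℝ} (hb : M.Pos b) :
    ∑ h, b h • nu' (Pi.single h 1) b = 0 := by
  have hbnn : M.Nonneg b := fun h => le_of_lt (hb h)
  have h1 : nu' b b = ∑ h, b h • nu' (Pi.single h 1) b :=
    nu'_decomp hC hA hG hE hbnn hb
  have h2 : nu' b b = 0 := by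
    rw [hE.1 b b hbnn hb (le_refl b)]
    exact nu_self hC hA hG hb
  rw [← h1, h2]

end Repr

lemma single_eq_smul_fin (i : Fin m) (c : ℝ) :
    (Pi.single i c : Fin m → ℝ) = c • (Pi.single i 1 : Fin m → ℝ) := by
  funext k
  classical
  simp [Pi.single_apply, mul_ite]

section Existence

variable {nu' : (M.K → ℝ) → (M.K → ℝ) → Fin m → ℝ}

/-- Existence of a strictly positive price vector orthogonal to all elementary net trades. -/
lemma exists_price (hC : M.Conserves) (hA : M.Anonymous) (hG : M.Aggregative)
    (hND : M.NonDissipative) (hE : M.IsNuExtension nu')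
    {b : M.K → ℝ} (hb : M.Pos b) :
    ∃ p : Fin m → ℝ, (∀ i, 0 < p i) ∧
      ∀ h : M.K, ∑ i, p i * nu' (Pi.single h 1) b i = 0 := by
  classical
  set v : M.K → (Fin m → ℝ) := fun h => nu' (Pi.single h 1) b with hv
  set W : Submodule ℝ (Fin m → ℝ) := Submodule.span ℝ (Set.range v) with hW
  -- every nonnegative element of W is 0
  have hW0 : ∀ x ∈ W, (∀ i, 0 ≤ x i) → x = 0 := by
    intro x hx hxnn
    rw [hW, Submodule.mem_span_range_iff_exists_fun] at hx
    obtain ⟨c, hc⟩ := hx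
    set T : ℝ := ∑ h, |c h| / b h with hT
    have hTh : ∀ h : M.K, |c h| ≤ T * b h := by
      intro h
      have h1 : |c h| / b h ≤ T := by
        rw [hT]
        exact Finset.single_le_sum (f := fun h => |c h| / b h)
          (fun h' _ => div_nonneg (abs_nonneg _) (le_of_lt (hb h'))) (Finset.mem_univ h)
      calc |c h| = (|c h| / b h) * b h := (div_mul_cancel₀ _ (ne_of_gt (hb h))).symm
      _ ≤ T * b h := mul_le_mul_of_nonneg_right h1 (le_of_lt (hb h))
    set a : M.K → ℝ := fun h => c h + T * b h with ha
    have hann : M.Nonneg a := by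
      intro h
      have := hTh h
      have := neg_abs_le (c h)
      simp only [ha]
      linarith
    have hsum0 : ∑ h, b h • v h = 0 := sum_b_nu' hC hA hG hE hb
    have hax : nu' a b = x := by
      have hd := nu'_decomp hC hA hG hE hann hb
      have h3 : ∑ h, a h • v h = (∑ h, c h • v h) + ∑ h, (T * b h) • v h := by
        rw [← Finset.sum_add_distrib]
        exact Finset.sum_congr rfl fun h _ => by
          show (c h + T * b h) • v h = c h • v h + (T * b h) • v h
          rw [add_smul]
      have h4 : ∑ h, (T * b h) • v h = T • ∑ h, b h • v h := by
        rw [Finset.smul_sum]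
        exact Finset.sum_congr rfl fun h _ => (smul_smul T (b h) (v h)).symm
      have h5 : ∑ h, a h • v h = x := by rw [h3, h4, hsum0, smul_zero, add_zero, hc]
      exact hd.trans h5
    rw [← hax]
    exact nu'_nonneg_zero hC hND hE hann hb (by rw [hax]; exact hxnn)
  -- separate W from the standard simplex
  have hWconv : Convex ℝ (W : Set (Fin m → ℝ)) := W.convex
  have hWclosed : IsClosed (W : Set (Fin m → ℝ)) := Submodule.closed_of_finiteDimensional W
  have hdisj : Disjoint (W : Set (Fin m → ℝ)) (stdSimplex ℝ (Fin m)) := by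
    rw [Set.disjoint_left]
    intro x hxW hxs
    have hx0 : x = 0 := hW0 x hxW fun i => hxs.1 i
    have := hxs.2
    rw [hx0] at this
    simp at this
  obtain ⟨f, u, w, hfu, huw, hft⟩ :=
    geometric_hahn_banach_closed_compact hWconv hWclosed (convex_stdSimplex ℝ (Fin m))
      (isCompact_stdSimplex ℝ (Fin m)) hdisj
  -- f vanishes on W
  have hf0 : ∀ x ∈ W, f x = 0 := by
    intro x hx
    by_contra hne
    have hmem : ((u + |u| + 1) / f x) • x ∈ W := W.smul_mem _ hx
    have := hfu _ hmem
    rw [map_smul] at this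
    rw [smul_eq_mul, div_mul_cancel₀ _ hne] at this
    have : |u| + 1 ≤ 0 := by linarith
    have := abs_nonneg u
    linarith
  have hu0 : 0 < u := by
    have := hfu 0 W.zero_mem
    simpa using this
  set p : Fin m → ℝ := fun i => f (Pi.single i 1) with hp
  have hsingle_mem : ∀ i : Fin m, (Pi.single i 1 : Fin m → ℝ) ∈ stdSimplex ℝ (Fin m) := by
    intro i
    constructor
    · intro k
      rcases eq_or_ne k i with rfl | hne
      · simp
      · simp [Pi.single_apply, hne]
    · simp [Pi.single_apply]
  have hppos : ∀ i, 0 < p i := by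
    intro i
    have := hft _ (hsingle_mem i)
    rw [hp]
    linarith
  have hflin : ∀ x : Fin m → ℝ, f x = ∑ i, x i * p i := by
    intro x
    conv_lhs => rw [← Finset.univ_sum_single x]
    rw [map_sum]
    congr 1; funext i
    rw [single_eq_smul_fin i (x i), map_smul, smul_eq_mul, hp]
  refine ⟨p, hppos, ?_⟩
  intro h
  have hvW : v h ∈ W := Submodule.subset_span ⟨h, rfl⟩
  have hfv : f (v h) = 0 := hf0 _ hvW
  rw [hflin] at hfv
  calc ∑ i, p i * nu' (Pi.single h 1) b i = ∑ i, v h i * p i :=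
        Finset.sum_congr rfl fun i _ => mul_comm _ _
  _ = 0 := hfv

end Existence

section Connectivity

variable {nu' : (M.K → ℝ) → (M.K → ℝ) → Fin m → ℝ}

/-- The commodity linkage relation: `i` and `j` are linked if there is an `ij`- or `ji`-index. -/
def Linked (M : ExchangeMechanism m) (i j : Fin m) : Prop :=
  (∃ h, M.IsIJIndex i j h) ∨ (∃ h, M.IsIJIndex j i h)

/-- Connectedness of the mechanism implies that any two commodities are linked
through a chain of indices. -/
lemma linked_total (hC : M.Conserves) (hA : M.Anonymous) (hG : M.Aggregative)
    (hInv : M.Invariant) (hE : M.IsNuExtension nu') (hConn : M.Connected nu')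
    (i j : Fin m) : Relation.EqvGen M.Linked i j := by
  classical
  rcases eq_or_ne i j with rfl | hne
  · exact Relation.EqvGen.refl i
  by_contra hns
  -- if `k` is not reachable from `i`, elementary net trades from reachable commodities
  -- have nonpositive `k`-component
  have cross : ∀ (b : M.K → ℝ), M.Pos b → ∀ h : M.K,
      Relation.EqvGen M.Linked i (M.ind h) → ∀ k, ¬ Relation.EqvGen M.Linked i k →
      nu' (Pi.single h 1) b k ≤ 0 := by
    intro b hb h hih k hk
    by_contra hpos
    push_neg at hpos
    have hki : k ≠ M.ind h := by
      intro e
      exact hk (e ▸ hih)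
    have hidx := index_of_pos hInv hE hb hki hpos
    exact hk (Relation.EqvGen.trans _ _ _ hih
      (Relation.EqvGen.rel _ _ (Or.inl ⟨h, hidx⟩)))
  obtain ⟨t, f, hf0, hflast, hstep⟩ := hConn i j hne
  have main : ∀ (l : ℕ) (hl : l < t + 1), ∀ k, ¬ Relation.EqvGen M.Linked i k →
      f ⟨l, hl⟩ k ≤ 0 := by
    intro l
    induction l with
    | zero =>
      intro hl k hk
      have h0 : (⟨0, hl⟩ : Fin (t + 1)) = 0 := rfl
      rw [h0, hf0]
      have hki : k ≠ i := by
        intro e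
        subst e
        exact hk (Relation.EqvGen.refl k)
      simp [Pi.single_apply, hki]
    | succ n ih =>
      intro hl k hk
      have hn : n < t + 1 := Nat.lt_of_succ_lt hl
      have hnt : n < t := Nat.lt_of_succ_lt_succ hl
      set kn : Fin t := ⟨n, hnt⟩ with hkn
      obtain ⟨a, b, hann, hbp, hagg, heq⟩ := hstep kn
      have hcast : kn.castSucc = ⟨n, hn⟩ := rfl
      have hsucc : kn.succ = ⟨n + 1, hl⟩ := rfl
      -- offers of unreachable commodities are zero
      have ha0 : ∀ h : M.K, ¬ Relation.EqvGen M.Linked i (M.ind h) → a h = 0 := by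
        intro h hh
        have h1 : M.agg a (M.ind h) ≤ f kn.castSucc (M.ind h) := hagg (M.ind h)
        rw [hcast] at h1
        have h2 : f ⟨n, hn⟩ (M.ind h) ≤ 0 := ih hn _ hh
        have h3 : 0 ≤ M.agg a (M.ind h) := agg_nonneg' hann _
        have h4 : M.agg a (M.ind h) = 0 := le_antisymm (by linarith) h3
        have h5 : a h ≤ M.agg a (M.ind h) := le_term_agg hann h
        exact le_antisymm (by linarith) (hann h)
      have hnu : nu' a b k ≤ 0 := by
        have hd := nu'_decomp hC hA hG hE hann hbp
        have hdk := congrFun hd k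
        rw [hdk]
        have : (∑ h, a h • nu' (Pi.single h 1) b) k
            = ∑ h, a h * nu' (Pi.single h 1) b k := by
          rw [Finset.sum_apply]
          rfl
        rw [this]
        apply Finset.sum_nonpos
        intro h _
        by_cases hh : Relation.EqvGen M.Linked i (M.ind h)
        · exact mul_nonpos_of_nonneg_of_nonpos (hann h) (cross b hbp h hh k hk)
        · rw [ha0 h hh, zero_mul]
      have heqk := congrFun heq k
      rw [hsucc, hcast] at heqk
      rw [heqk]
      have := ih hn k hk
      simp only [Pi.add_apply]
      linarith
  have hlast := main t (Nat.lt_succ_self t) j hns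
  have : f ⟨t, Nat.lt_succ_self t⟩ = Pi.single j 1 := by
    rw [show (⟨t, Nat.lt_succ_self t⟩ : Fin (t + 1)) = Fin.last t from rfl, hflast]
  rw [this] at hlast
  rw [Pi.single_apply, if_pos rfl] at hlast
  linarith

end Connectivity

end ExchangeMechanism

/-- Emergence of Prices.  Let `M ∈ 𝔐(m)` with extended net-trade function
`ν`.  Then there is a unique map `p : S₊ → ℝ₊₊^m/∼` (strictly positive price vectors, up to
positive scaling) satisfying value conservation: `p(b)·ν(a,b) = 0` for every `a ∈ S`,
`b ∈ S₊`. -/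
theorem emergence_of_prices {m : ℕ} (M : ExchangeMechanism m)
    (nu' : (M.K → ℝ) → (M.K → ℝ) → Fin m → ℝ) (hM : M.MemM nu') :
    ∃ p : (M.K → ℝ) → Fin m → ℝ,
      ((∀ b, M.Pos b → ∀ i, 0 < p b i) ∧
        (∀ a b, M.Nonneg a → M.Pos b → ∑ i, p b i * nu' a b i = 0)) ∧
      ∀ q : (M.K → ℝ) → Fin m → ℝ,
        ((∀ b, M.Pos b → ∀ i, 0 < q b i) ∧
          (∀ a b, M.Nonneg a → M.Pos b → ∑ i, q b i * nu' a b i = 0)) →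
        ∀ b, M.Pos b → ∃ c : ℝ, 0 < c ∧ q b = c • p b := by
  classical
  obtain ⟨hC, hA, hG, hInv, hND, hFlex, hE, hConn⟩ := hM
  -- value conservation against arbitrary offers, from the elementary one
  have hex : ∀ b : M.K → ℝ, M.Pos b → ∃ p : Fin m → ℝ, (∀ i, 0 < p i) ∧
      ∀ a, M.Nonneg a → ∑ i, p i * nu' a b i = 0 := by
    intro b hb
    obtain ⟨p, hp, hcons⟩ := ExchangeMechanism.exists_price hC hA hG hND hE hb
    refine ⟨p, hp, ?_⟩
    intro a ha
    have hd := ExchangeMechanism.nu'_decomp hC hA hG hE ha hb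
    have h1 : ∀ i, nu' a b i = ∑ h, a h * nu' (Pi.single h 1) b i := by
      intro i
      have := congrFun hd i
      rw [this, Finset.sum_apply]
      rfl
    calc ∑ i, p i * nu' a b i
        = ∑ i, ∑ h, p i * (a h * nu' (Pi.single h 1) b i) := by
          refine Finset.sum_congr rfl fun i _ => ?_
          rw [h1 i, Finset.mul_sum]
    _ = ∑ h, ∑ i, p i * (a h * nu' (Pi.single h 1) b i) := Finset.sum_comm
    _ = ∑ h, a h * ∑ i, p i * nu' (Pi.single h 1) b i := by
          refine Finset.sum_congr rfl fun h _ => ?_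
          rw [Finset.mul_sum]
          exact Finset.sum_congr rfl fun i _ => by ring
    _ = 0 := by
          refine Finset.sum_eq_zero fun h _ => ?_
          rw [hcons h, mul_zero]
  set P : (M.K → ℝ) → Fin m → ℝ := fun b =>
    if hb : M.Pos b then (hex b hb).choose else fun _ => 1 with hP
  have hPspec : ∀ b, M.Pos b → (∀ i, 0 < P b i) ∧
      (∀ a, M.Nonneg a → ∑ i, P b i * nu' a b i = 0) := by
    intro b hb
    have : P b = (hex b hb).choose := by rw [hP]; simp only [dif_pos hb]
    rw [this]
    exact ⟨(hex b hb).choose_spec.1, (hex b hb).choose_spec.2⟩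
  refine ⟨P, ⟨fun b hb i => (hPspec b hb).1 i, fun a b ha hb => (hPspec b hb).2 a ha⟩, ?_⟩
  rintro q ⟨hqpos, hqcons⟩ b hb
  rcases Nat.eq_zero_or_pos m with hm | hm
  · refine ⟨1, one_pos, ?_⟩
    funext i
    exact absurd i.isLt (by omega)
  · set i₀ : Fin m := ⟨0, hm⟩ with hi₀
    have hPpos : ∀ i, 0 < P b i := (hPspec b hb).1
    -- the fundamental price-ratio identity along a single index
    have ratio : ∀ x y : Fin m, (∃ h, M.IsIJIndex x y h) →
        q b x * P b y = q b y * P b x := by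
      intro x y hxy
      rcases eq_or_ne x y with rfl | hxyne
      · rfl
      obtain ⟨h, hpure⟩ := hFlex x y hxy
      obtain ⟨c, hc, hform⟩ := ExchangeMechanism.pure_repr hInv hND hE hxyne hpure hb
      have hsum : ∀ p' : Fin m → ℝ, (∑ i, p' i * nu' (Pi.single h 1) b i)
          = c * p' y - p' x := by
        intro p'
        calc ∑ i, p' i * nu' (Pi.single h 1) b i
            = ∑ i, (c * (p' i * (Pi.single y 1 : Fin m → ℝ) i)
                - p' i * (Pi.single x 1 : Fin m → ℝ) i) := by
              refine Finset.sum_congr rfl fun i _ => ?_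
              rw [congrFun hform i]
              simp only [Pi.sub_apply, Pi.smul_apply, smul_eq_mul]
              ring
        _ = c * (∑ i, p' i * (Pi.single y 1 : Fin m → ℝ) i)
            - ∑ i, p' i * (Pi.single x 1 : Fin m → ℝ) i := by
              rw [Finset.sum_sub_distrib, Finset.mul_sum]
        _ = c * p' y - p' x := by
              simp [Pi.single_apply, mul_ite, Finset.sum_ite_eq', Finset.mem_univ]
      have hsnn : M.Nonneg (Pi.single h (1:ℝ)) :=
        ExchangeMechanism.single_nonneg' h zero_le_one
      have hq0 : c * q b y - q b x = 0 := by
        rw [← hsum (q b)]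
        exact hqcons (Pi.single h 1) b hsnn hb
      have hp0 : c * P b y - P b x = 0 := by
        rw [← hsum (P b)]
        exact (hPspec b hb).2 (Pi.single h 1) hsnn
      have e1 : q b x = c * q b y := by linarith
      have e2 : P b x = c * P b y := by linarith
      rw [e1, e2]
      ring
    -- ratio equality propagates along the linkage relation
    have key : ∀ k k' : Fin m, Relation.EqvGen M.Linked k k' →
        q b k * P b k' = q b k' * P b k := by
      intro k k' hkk'
      induction hkk' with
      | rel x y hxy =>
        rcases hxy with h | h
        · exact ratio x y h
        · exact (ratio y x h).symm
      | refl x => rfl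
      | symm x y _ ih => exact ih.symm
      | trans x y z _ _ ih1 ih2 =>
        have hy : P b y ≠ 0 := ne_of_gt (hPpos y)
        refine mul_left_cancel₀ hy ?_
        linear_combination P b z * ih1 + P b x * ih2
    refine ⟨q b i₀ / P b i₀, div_pos (hqpos b hb i₀) (hPpos i₀), ?_⟩
    funext k
    have hk := key i₀ k
      (ExchangeMechanism.linked_total hC hA hG hInv hE hConn i₀ k)
    have hne : P b i₀ ≠ 0 := ne_of_gt (hPpos i₀)
    rw [Pi.smul_apply, smul_eq_mul, div_mul_eq_mul_div, eq_comm, div_eq_iff hne]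
    linarith [hk]
end

section
/- Let M ∈ 𝔐(m) with extended net-trade function ν, and let v,w ∈ ℝ₊^m. Then the following are equivalent: (1) there is an a ∈ S_P(v) such that v + ν(a,b) ∈ ⟨w⟩ for SOME b ∈ S₊; (2) there is an a ∈ S_P(v) such that v + ν(a,b) ∈ ⟨w⟩ for ALL b ∈ S₊; (3) for each u ∈ ⟨v⟩ there is an a ∈ S_P(u) such that u + ν(a,b) ∈ ⟨w⟩ for all b ∈ S₊. -/
open Finset

/-- `v` and `w` have the same componentwise sign pattern `(+,−,0)`, i.e. `v ∈ ⟨w⟩`. -/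
def SameSign {m : ℕ} (v w : Fin m → ℝ) : Prop :=
  ∀ i, (0 < v i ↔ 0 < w i) ∧ (v i < 0 ↔ w i < 0)

namespace ExchangeMechanism

variable {m : ℕ} (M : ExchangeMechanism m)

/-- `P ⊆ K` contains exactly one pure `ij`-index for each ordered pair `(i,j)` for which
`M` has a pure `ij`-index, and nothing else. -/
def IsPureSelection (P : Set M.K) : Prop :=
  (∀ h ∈ P, ∃ i j, M.IsPureIJIndex i j h) ∧
    ∀ i j : Fin m, (∃ h, M.IsPureIJIndex i j h) →
      ∃! h, h ∈ P ∧ M.IsPureIJIndex i j h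

/-- `a ∈ S_P`: a nonnegative offer supported on `P`. -/
def SPoffer (P : Set M.K) (a : M.K → ℝ) : Prop :=
  M.Nonneg a ∧ ∀ h ∉ P, a h = 0

/-- `a ∈ S_P(v)`: a `P`-offer subordinate to `v`. -/
def SPofferLe (P : Set M.K) (v : Fin m → ℝ) (a : M.K → ℝ) : Prop :=
  M.SPoffer P a ∧ M.agg a ≤ v

end ExchangeMechanism

section Aux

open ExchangeMechanism

variable {m : ℕ} {M : ExchangeMechanism m}

lemma sum_two (x y : M.K → ℝ) : (∑ k, ![x, y] k) = x + y := by
  simp [Fin.sum_univ_two]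

lemma sum_three (x y z : M.K → ℝ) : (∑ k, ![x, y, z] k) = x + y + z := by
  simp only [Fin.sum_univ_three]
  rfl

lemma valid_two' {x y : M.K → ℝ} (hx : M.Nonneg x) (hy : M.Nonneg y)
    (hs : M.Pos (x + y)) : M.Valid 2 ![x, y] := by
  refine ⟨fun k => ?_, by rw [sum_two]; exact hs⟩
  fin_cases k <;> simpa

lemma valid_three' {x y z : M.K → ℝ} (hx : M.Nonneg x) (hy : M.Nonneg y) (hz : M.Nonneg z)
    (hs : M.Pos (x + y + z)) : M.Valid 3 ![x, y, z] := by
  refine ⟨fun k => ?_, by rw [sum_three]; exact hs⟩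
  fin_cases k <;> simpa

lemma ret_zero (hext : M.IsNuExtension nu') {b : M.K → ℝ} (hb : M.Pos b) :
    M.rho 2 ![0, b] 0 = 0 := by
  have h0 : M.Nonneg (0 : M.K → ℝ) := fun h => le_refl 0
  have h2 : nu' ((2:ℝ) • (0 : M.K → ℝ)) b = (2:ℝ) • nu' 0 b := hext.2.1 0 b 2 h0 hb (by norm_num)
  rw [smul_zero] at h2
  have hz : nu' 0 b = 0 := by
    funext i
    have := congrFun h2 i
    simp only [Pi.smul_apply, smul_eq_mul] at this
    simp only [Pi.zero_apply]
    linarith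
  have he : nu' 0 b = M.nu 0 b := hext.1 0 b h0 hb (fun h => (hb h).le)
  have : M.nu 0 b = 0 := by rw [← he, hz]
  have hnu : M.nu 0 b = M.rho 2 ![0, b] 0 - M.agg 0 := by
    show M.trade 0 b - M.agg 0 = _
    unfold ExchangeMechanism.trade ExchangeMechanism.ret
    rw [sub_zero]
  have hagg0 : M.agg (0 : M.K → ℝ) = 0 := by
    funext i; simp [ExchangeMechanism.agg]
  rw [hnu, hagg0, sub_zero] at this
  exact this

lemma rho2_swap (hA : M.Anonymous) {x y : M.K → ℝ} (hv : M.Valid 2 ![x, y]) :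
    M.rho 2 ![y, x] 0 = M.rho 2 ![x, y] 1 := by
  have hperm := hA 2 ![x, y] (Equiv.swap 0 1) hv
  have hcomp : (![x, y] ∘ (Equiv.swap 0 1)) = ![y, x] := by
    funext k
    fin_cases k <;> simp [Equiv.swap_apply_left, Equiv.swap_apply_right]
  rw [hcomp] at hperm
  have := congrFun hperm 0
  simpa using this

def rot3 : Equiv.Perm (Fin 3) := ⟨![1, 2, 0], ![2, 0, 1], by decide, by decide⟩

lemma rho3_rot (hA : M.Anonymous) {x y z : M.K → ℝ} (hv : M.Valid 3 ![x, y, z]) (k : Fin 3) :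
    M.rho 3 ![y, z, x] k = M.rho 3 ![x, y, z] (rot3 k) := by
  have hperm := hA 3 ![x, y, z] rot3 hv
  have hcomp : (![x, y, z] ∘ rot3) = ![y, z, x] := by
    funext k
    fin_cases k <;> rfl
  rw [hcomp] at hperm
  exact congrFun hperm k

end Aux
section Aux2
open ExchangeMechanism
variable {m : ℕ} {M : ExchangeMechanism m}

lemma snoc_eq_two (x y : M.K → ℝ) (f : Fin 1 → M.K → ℝ) (hf : f 0 = x) :
    (Fin.snoc f y : Fin 2 → M.K → ℝ) = ![x, y] := by
  funext k
  have h0 : (Fin.snoc f y : Fin 2 → M.K → ℝ) (Fin.castSucc 0) = x := by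
    rw [Fin.snoc_castSucc, hf]
  have h1 : (Fin.snoc f y : Fin 2 → M.K → ℝ) (Fin.last 1) = y := by
    rw [Fin.snoc_last]
  fin_cases k
  · exact h0
  · exact h1

lemma split_agg (hAg : M.Aggregative) {x y z : M.K → ℝ} (hv : M.Valid 3 ![x, y, z]) :
    M.rho 2 ![x, y + z] 0 = M.rho 3 ![x, y, z] 0 ∧
    M.rho 2 ![x, y + z] 1 = M.rho 3 ![x, y, z] 1 + M.rho 3 ![x, y, z] 2 := by
  have h := hAg 1 ![x, y, z] hv
  have e1 : (Fin.snoc (fun k : Fin 1 => ![x,y,z] k.castSucc.castSucc)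
      (![x,y,z] (Fin.castSucc (Fin.last 1)) + ![x,y,z] (Fin.last 2)) : Fin 2 → M.K → ℝ)
      = ![x, y + z] := snoc_eq_two _ _ _ rfl
  have e2 : (Fin.snoc (fun k : Fin 1 => M.rho 3 ![x,y,z] k.castSucc.castSucc)
      (M.rho 3 ![x,y,z] (Fin.castSucc (Fin.last 1)) + M.rho 3 ![x,y,z] (Fin.last 2))
      : Fin 2 → Fin m → ℝ)
      = ![M.rho 3 ![x,y,z] 0,
          M.rho 3 ![x,y,z] (Fin.castSucc (Fin.last 1)) + M.rho 3 ![x,y,z] (Fin.last 2)] := by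
    funext k
    fin_cases k <;> simp [Fin.snoc]
  rw [e1, e2] at h
  exact ⟨by rw [h]; rfl, by rw [h]; rfl⟩

lemma merge_head (hA : M.Anonymous) (hAg : M.Aggregative)
    {x y z : M.K → ℝ} (hx : M.Nonneg x) (hy : M.Nonneg y) (hz : M.Nonneg z)
    (hs : M.Pos (x + y + z)) :
    M.rho 2 ![x + y, z] 0 = M.rho 2 ![x, y + z] 0 + M.rho 2 ![y, z + x] 0 := by
  have hxyz : M.Valid 3 ![x, y, z] := valid_three' hx hy hz hs
  have hyzx : M.Valid 3 ![y, z, x] := valid_three' hy hz hx (by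
    have : y + z + x = x + y + z := by abel
    rw [this]; exact hs)
  have hzxy : M.Valid 3 ![z, x, y] := valid_three' hz hx hy (by
    have : z + x + y = x + y + z := by abel
    rw [this]; exact hs)
  have hv2 : M.Valid 2 ![z, x + y] := valid_two' hz (fun h => add_nonneg (hx h) (hy h)) (by
    have : z + (x + y) = x + y + z := by abel
    rw [this]; exact hs)
  have h1 : M.rho 2 ![x + y, z] 0 = M.rho 2 ![z, x + y] 1 := rho2_swap hA hv2
  have h2 := (split_agg hAg hzxy).2
  -- rho 2 ![z, x+y] 1 = rho 3 ![z,x,y] 1 + rho 3 ![z,x,y] 2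
  have r1 : ∀ k, M.rho 3 ![z, x, y] k = M.rho 3 ![y, z, x] (rot3 k) := fun k => rho3_rot hA hyzx k
  have r2 : ∀ k, M.rho 3 ![y, z, x] k = M.rho 3 ![x, y, z] (rot3 k) := fun k => rho3_rot hA hxyz k
  have e1 : M.rho 3 ![z, x, y] 1 = M.rho 3 ![x, y, z] 0 := by
    rw [r1 1, r2 (rot3 1)]; rfl
  have e2 : M.rho 3 ![z, x, y] 2 = M.rho 3 ![x, y, z] 1 := by
    rw [r1 2, r2 (rot3 2)]; rfl
  have s1 : M.rho 3 ![x, y, z] 0 = M.rho 2 ![x, y + z] 0 := ((split_agg hAg hxyz).1).symm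
  have s2 : M.rho 3 ![x, y, z] 1 = M.rho 2 ![y, z + x] 0 := by
    have := (split_agg hAg hyzx).1
    rw [this, r2 0]; rfl
  rw [h1, h2, e1, e2, s1, s2]

end Aux2
section Aux3
open ExchangeMechanism
variable {m : ℕ} {M : ExchangeMechanism m}

lemma nonneg_sum {n : ℕ} {x : Fin n → M.K → ℝ} (hx : ∀ k, M.Nonneg (x k)) :
    M.Nonneg (∑ k, x k) := by
  intro h
  rw [Finset.sum_apply]
  exact Finset.sum_nonneg fun k _ => hx k h

lemma pos_congr {x y : M.K → ℝ} (hxy : x = y) (hx : M.Pos x) : M.Pos y := hxy ▸ hx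

lemma decomp_fin (hA : M.Anonymous) (hAg : M.Aggregative)
    {nu' : (M.K → ℝ) → (M.K → ℝ) → Fin m → ℝ} (hext : M.IsNuExtension nu') :
    ∀ (n : ℕ) (x : Fin n → M.K → ℝ) (c : M.K → ℝ),
    (∀ k, M.Nonneg (x k)) → M.Nonneg c → M.Pos ((∑ k, x k) + c) →
    M.rho 2 ![∑ k, x k, c] 0 = ∑ k, M.rho 2 ![x k, ((∑ k', x k') + c) - x k] 0 := by
  intro n
  induction n with
  | zero =>
    intro x c hx hc hpos
    have h0 : (∑ k, x k) = 0 := by simp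
    rw [h0]
    rw [h0, zero_add] at hpos
    rw [ret_zero hext hpos]
    simp
  | succ n ih =>
    intro x c hx hc hpos
    set X := x (Fin.last n) with hX
    set S := ∑ k : Fin n, x (Fin.castSucc k) with hS
    have hsum : (∑ k, x k) = S + X := Fin.sum_univ_castSucc x
    have hSnn : M.Nonneg S := nonneg_sum (fun k => hx _)
    have hXnn : M.Nonneg X := hx _
    have htot : M.Pos (S + X + c) := pos_congr (by rw [hsum]) hpos
    have hmerge : M.rho 2 ![S + X, c] 0
        = M.rho 2 ![S, X + c] 0 + M.rho 2 ![X, c + S] 0 := merge_head hA hAg hSnn hXnn hc htot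
    have hihpos : M.Pos (S + (X + c)) := pos_congr (by abel_nf) htot
    have hih := ih (fun k => x (Fin.castSucc k)) (X + c) (fun k => hx _)
      (fun h => add_nonneg (hXnn h) (hc h)) (by rw [← hS]; exact hihpos)
    rw [← hS] at hih
    rw [hsum, hmerge, hih]
    simp only [add_assoc]
    rw [Fin.sum_univ_castSucc (fun k : Fin (n + 1) => M.rho 2 ![x k, S + (X + c) - x k] 0),
      ← hX]
    have hcs : c + S = S + (X + c) - X := by abel
    rw [hcs]

lemma decomp_K (hA : M.Anonymous) (hAg : M.Aggregative)
    {nu' : (M.K → ℝ) → (M.K → ℝ) → Fin m → ℝ} (hext : M.IsNuExtension nu')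
    {a B : M.K → ℝ} (ha : M.Nonneg a) (hB : M.Pos B) (hle : a ≤ B) :
    M.rho 2 ![a, B - a] 0
      = ∑ h : M.K, M.rho 2 ![Pi.single h (a h), B - Pi.single h (a h)] 0 := by
  classical
  let e := (Fintype.equivFin M.K).symm
  set x : Fin (Fintype.card M.K) → M.K → ℝ := fun k => Pi.single (e k) (a (e k)) with hx
  have hsum : (∑ k, x k) = a := by
    rw [hx]
    rw [Equiv.sum_comp e (fun h => Pi.single h (a h))]
    exact Finset.univ_sum_single a
  have hxnn : ∀ k, M.Nonneg (x k) := by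
    intro k g
    rw [hx]
    by_cases hg : g = e k
    · subst hg; simpa using ha (e k)
    · simp [Pi.single_eq_of_ne hg]
  have hcnn : M.Nonneg (B - a) := fun g => sub_nonneg.2 (hle g)
  have hpos : M.Pos ((∑ k, x k) + (B - a)) := by
    apply pos_congr (x := B)
    · rw [hsum]; abel
    · exact hB
  have h := decomp_fin hA hAg hext _ x (B - a) hxnn hcnn hpos
  rw [hsum] at h
  have htot : a + (B - a) = B := by abel
  rw [htot] at h
  rw [h, hx]
  exact Equiv.sum_comp e (fun h' => M.rho 2 ![Pi.single h' (a h'), B - Pi.single h' (a h')] 0)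

end Aux3
section Aux4
open ExchangeMechanism
variable {m : ℕ} {M : ExchangeMechanism m}

lemma agg_single (h : M.K) (t : ℝ) (l : Fin m) :
    M.agg (Pi.single h t) l = if M.ind h = l then t else 0 := by
  classical
  unfold ExchangeMechanism.agg
  rw [Finset.sum_congr rfl (fun g _ => Pi.single_apply h t g)]
  rw [Finset.sum_ite_eq' (Finset.univ.filter (fun g => M.ind g = l)) h (fun _ => t)]
  simp

lemma single_eq_smul_unit (h : M.K) (t : ℝ) : Pi.single h t = t • M.unit h := by
  funext g
  by_cases hg : g = h
  · subst hg; simp [ExchangeMechanism.unit]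
  · simp [Pi.single_eq_of_ne hg, ExchangeMechanism.unit]

lemma unit_nonneg (h : M.K) : M.Nonneg (M.unit h) := by
  intro g
  by_cases hg : g = h
  · subst hg; rw [ExchangeMechanism.unit, Pi.single_eq_same]; norm_num
  · rw [ExchangeMechanism.unit, Pi.single_eq_of_ne hg]

lemma ret_scaled_pure (hI : M.Invariant) {i j : Fin m} {h : M.K} (hp : M.IsPureIJIndex i j h)
    {t : ℝ} (ht : 0 < t) {d : M.K → ℝ} (hd : M.Nonneg d) (hd' : ∀ g, g ≠ h → 0 < d g)
    {k : Fin m} (hk : k ≠ j) : M.rho 2 ![t • M.unit h, d] 0 k = 0 := by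
  classical
  have hi : M.ind h = i := hp.1.1
  set lam : Fin m → ℝ := fun l => if l = i then t else 1 with hlam
  have hlampos : ∀ l, 0 < lam l := by
    intro l; rw [hlam]; dsimp only; split <;> [exact ht; exact one_pos]
  set a' : M.K → ℝ := fun g => (lam (M.ind g))⁻¹ * d g with ha'
  have ha'nn : M.Nonneg a' := fun g =>
    mul_nonneg (inv_nonneg.2 (hlampos _).le) (hd g)
  have hval : M.Valid 2 ![M.unit h, a'] := by
    apply valid_two' (unit_nonneg h) ha'nn
    intro g
    rw [Pi.add_apply]
    by_cases hg : g = h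
    · subst hg
      have h1 : M.unit g g = 1 := Pi.single_eq_same g 1
      have h2 : 0 ≤ a' g := ha'nn g
      rw [h1]; linarith
    · have h1 : M.unit h g = 0 := Pi.single_eq_of_ne hg 1
      have h2 : 0 < a' g := mul_pos (inv_pos.2 (hlampos _)) (hd' g hg)
      rw [h1]; linarith
  have hinv := hI 2 ![M.unit h, a'] lam hlampos hval
  have hcomp : (fun kk => M.scaleS lam (![M.unit h, a'] kk)) = ![t • M.unit h, d] := by
    funext kk
    fin_cases kk
    · show M.scaleS lam (M.unit h) = t • M.unit h
      funext g
      show lam (M.ind g) * M.unit h g = t * M.unit h g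
      by_cases hg : g = h
      · subst hg; rw [hi]; simp [hlam]
      · have : M.unit h g = 0 := Pi.single_eq_of_ne hg 1
        rw [this, mul_zero, mul_zero]
    · show M.scaleS lam a' = d
      funext g
      show lam (M.ind g) * ((lam (M.ind g))⁻¹ * d g) = d g
      rw [← mul_assoc, mul_inv_cancel₀ (ne_of_gt (hlampos _)), one_mul]
  rw [hcomp] at hinv
  have := congrFun (congrFun hinv 0) k
  rw [this]
  have hpk : M.ret (M.unit h) a' k = 0 := hp.2 a' hval k hk
  have : M.rho 2 ![M.unit h, a'] 0 k = 0 := hpk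
  rw [this, mul_zero]

lemma T_cases (hC : M.Conserves) (hND : M.NonDissipative) (hI : M.Invariant)
    {i j : Fin m} {h : M.K} (hp : M.IsPureIJIndex i j h)
    {t : ℝ} (ht : 0 < t) {d : M.K → ℝ} (hd : M.Nonneg d) (hd' : ∀ g, g ≠ h → 0 < d g) :
    (i ≠ j → ((∀ k, k ≠ j → M.rho 2 ![t • M.unit h, d] 0 k = 0) ∧
      0 < M.rho 2 ![t • M.unit h, d] 0 j)) ∧
    (i = j → ∀ l, M.rho 2 ![t • M.unit h, d] 0 l = if M.ind h = l then t else 0) := by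
  classical
  have hi : M.ind h = i := hp.1.1
  set x : M.K → ℝ := t • M.unit h with hxdef
  set T : Fin m → ℝ := M.rho 2 ![x, d] 0 with hT
  have hxsingle : x = Pi.single h t := (single_eq_smul_unit h t).symm
  have haggx : ∀ l, M.agg x l = if M.ind h = l then t else 0 := by
    intro l; rw [hxsingle]; exact agg_single h t l
  have hxnn : M.Nonneg x := by
    intro g; rw [hxsingle]
    by_cases hg : g = h
    · subst hg; rw [Pi.single_eq_same]; exact ht.le
    · rw [Pi.single_eq_of_ne hg]
  have hval : M.Valid 2 ![x, d] := by
    apply valid_two' hxnn hd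
    intro g
    rw [Pi.add_apply]
    by_cases hg : g = h
    · subst hg
      have : x g = t := by rw [hxsingle, Pi.single_eq_same]
      rw [this]
      have := hd g
      linarith
    · have : 0 < d g := hd' g hg
      have := hxnn g
      linarith
  have hpure : ∀ k, k ≠ j → T k = 0 := fun k hk => ret_scaled_pure hI hp ht hd hd' hk
  -- conservation
  have hcons : T + M.rho 2 ![x, d] 1 = M.agg x + M.agg d := by
    have := hC 2 ![x, d] hval
    rw [Fin.sum_univ_two, Fin.sum_univ_two] at this
    simpa using this
  have hnd0 : T = M.agg x ∨ ∃ l, M.agg x l < T l := by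
    have := hND 2 ![x, d] hval 0
    simpa using this
  constructor
  · intro hij
    have hTj : 0 < T j := by
      rcases hnd0 with h0 | ⟨l, hl⟩
      · exfalso
        have h1 : T i = 0 := hpure i hij
        have h2 : M.agg x i = t := by rw [haggx]; simp [hi]
        rw [h0, h2] at h1; linarith
      · by_cases hlj : l = j
        · subst hlj
          have : M.agg x l = 0 := by
            rw [haggx]
            have : M.ind h ≠ l := by rw [hi]; exact hij
            simp [this]
          linarith
        · exfalso
          have h1 : T l = 0 := hpure l hlj
          have h2 : 0 ≤ M.agg x l := by
            rw [haggx]; split <;> [exact ht.le; exact le_refl 0]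
          rw [h1] at hl; linarith
    exact ⟨hpure, hTj⟩
  · intro hij l
    subst hij
    -- i = j case: show T = agg x (then evaluate)
    have hgoal : T = M.agg x := by
      rcases hnd0 with h0 | ⟨l', hl'⟩
      · exact h0
      · exfalso
        have hli : l' = i := by
          by_contra hne
          have h1 : T l' = 0 := hpure l' hne
          have h2 : M.agg x l' = 0 := by
            rw [haggx]
            have : M.ind h ≠ l' := by rw [hi]; exact fun hc => hne hc.symm
            simp [this]
          rw [h1, h2] at hl'; linarith
        subst hli
        have hTi : t < T l' := by
          have : M.agg x l' = t := by rw [haggx]; simp [hi]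
          linarith [hl', this.symm.le]
        have hnd1 := hND 2 ![x, d] hval 1
        simp only [Matrix.cons_val_one, Matrix.head_cons] at hnd1
        rcases hnd1 with h1 | ⟨l2, hl2⟩
        · have : T = M.agg x := by
            have := hcons
            rw [h1] at this
            have := add_right_cancel this
            exact this
          have h2 := congrFun this l'
          have h3 : M.agg x l' = t := by rw [haggx]; simp [hi]
          rw [h3] at h2; linarith
        · have hrho1 : M.rho 2 ![x, d] 1 = M.agg x + M.agg d - T := by
            rw [← hcons]; abel
          rw [hrho1] at hl2
          simp only [Pi.sub_apply, Pi.add_apply] at hl2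
          have h4 : T l2 < M.agg x l2 := by
            have h5 : (![d] 0 : M.K → ℝ) = d := rfl
            rw [h5] at hl2; linarith
          by_cases hl2i : l2 = l'
          · subst hl2i
            have h3 : M.agg x l2 = t := by rw [haggx]; simp [hi]
            rw [h3] at h4
            linarith
          · have h1 : T l2 = 0 := hpure l2 hl2i
            have h2 : M.agg x l2 = 0 := by
              rw [haggx]
              have : M.ind h ≠ l2 := by rw [hi]; exact fun hc => hl2i hc.symm
              simp [this]
            rw [h1, h2] at h4; linarith
    rw [hgoal, haggx]

end Aux4
section Aux5
open ExchangeMechanism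
variable {m : ℕ} {M : ExchangeMechanism m}

lemma pure_j_unique {i j i' j' : Fin m} {h : M.K}
    (hp : M.IsPureIJIndex i j h) (hp' : M.IsPureIJIndex i' j' h) : j = j' := by
  by_contra hne
  obtain ⟨⟨hind, aw, hvalw, hretw⟩, _⟩ := hp
  have := hp'.2 aw hvalw j hne
  rw [this] at hretw
  exact lt_irrefl 0 hretw

lemma T_l (hC : M.Conserves) (hND : M.NonDissipative) (hI : M.Invariant)
    {nu' : (M.K → ℝ) → (M.K → ℝ) → Fin m → ℝ} (hext : M.IsNuExtension nu')
    {P : Set M.K} (hP1 : ∀ h ∈ P, ∃ i j, M.IsPureIJIndex i j h)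
    {a : M.K → ℝ} (hSP : M.SPoffer P a)
    {B : M.K → ℝ} (hB : M.Pos B) (hle : a ≤ B) (h : M.K) (l : Fin m) :
    0 ≤ M.rho 2 ![Pi.single h (a h), B - Pi.single h (a h)] 0 l ∧
    (0 < M.rho 2 ![Pi.single h (a h), B - Pi.single h (a h)] 0 l ↔
      ∃ i j, 0 < a h ∧ M.IsPureIJIndex i j h ∧ j = l) := by
  classical
  by_cases ha0 : a h = 0
  · have hz : M.rho 2 ![Pi.single h (a h), B - Pi.single h (a h)] 0 = 0 := by
      rw [ha0, Pi.single_zero, sub_zero]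
      exact ret_zero hext hB
    rw [hz]
    refine ⟨le_refl 0, ?_⟩
    simp only [Pi.zero_apply]
    constructor
    · intro hc; exact absurd hc (lt_irrefl 0)
    · rintro ⟨i, j, hpos, -⟩; rw [ha0] at hpos; exact absurd hpos (lt_irrefl 0)
  · have ha : 0 < a h := lt_of_le_of_ne (hSP.1 h) (Ne.symm ha0)
    have hPmem : h ∈ P := by
      by_contra hnp
      exact ha0 (hSP.2 h hnp)
    obtain ⟨i0, j0, hp0⟩ := hP1 h hPmem
    have hd : M.Nonneg (B - Pi.single h (a h)) := by
      intro g
      rw [Pi.sub_apply]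
      by_cases hg : g = h
      · subst hg; rw [Pi.single_eq_same]; have := hle g; linarith
      · rw [Pi.single_eq_of_ne hg]; have := hB g; linarith
    have hd' : ∀ g : M.K, g ≠ h → 0 < (B - (Pi.single h (a h) : M.K → ℝ)) g := by
      intro g hg
      rw [Pi.sub_apply, Pi.single_eq_of_ne hg]
      have := hB g; linarith
    have hsm : Pi.single h (a h) = a h • M.unit h := single_eq_smul_unit h (a h)
    have Tc := T_cases hC hND hI hp0 ha hd hd'
    rw [← hsm] at Tc
    by_cases hij : i0 = j0
    · have hTall := Tc.2 hij
      have hil : M.ind h = i0 := hp0.1.1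
      constructor
      · rw [hTall l]; split <;> [exact ha.le; exact le_refl 0]
      · constructor
        · intro hlt
          rw [hTall l] at hlt
          by_cases hhl : M.ind h = l
          · exact ⟨i0, j0, ha, hp0, by rw [← hij, ← hil, hhl]⟩
          · rw [if_neg hhl] at hlt; exact absurd hlt (lt_irrefl 0)
        · rintro ⟨i, j, -, hpij, hjl⟩
          have hjj : j = j0 := pure_j_unique hpij hp0
          have : M.ind h = l := by rw [hil, hij, ← hjj, hjl]
          rw [hTall l, if_pos this]; exact ha
    · obtain ⟨hk0, hposj⟩ := Tc.1 hij
      constructor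
      · by_cases hlj : l = j0
        · subst hlj; exact hposj.le
        · rw [hk0 l hlj]
      · constructor
        · intro hlt
          by_cases hlj : l = j0
          · exact ⟨i0, j0, ha, hp0, hlj.symm⟩
          · rw [hk0 l hlj] at hlt; exact absurd hlt (lt_irrefl 0)
        · rintro ⟨i, j, -, hpij, hjl⟩
          have hjj : j = j0 := pure_j_unique hpij hp0
          rw [← hjl, hjj]
          exact hposj

lemma sign_char (hC : M.Conserves) (hA : M.Anonymous) (hAg : M.Aggregative)
    (hI : M.Invariant) (hND : M.NonDissipative)
    {nu' : (M.K → ℝ) → (M.K → ℝ) → Fin m → ℝ} (hext : M.IsNuExtension nu')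
    {P : Set M.K} (hP1 : ∀ h ∈ P, ∃ i j, M.IsPureIJIndex i j h)
    {a : M.K → ℝ} (hSP : M.SPoffer P a) {v : Fin m → ℝ} (hav : M.agg a ≤ v)
    {b : M.K → ℝ} (hb : M.Pos b) (l : Fin m) :
    0 ≤ (v + nu' a b) l ∧
    (0 < (v + nu' a b) l ↔
      (M.agg a l < v l ∨ ∃ h i j, 0 < a h ∧ M.IsPureIJIndex i j h ∧ j = l)) := by
  classical
  set t : ℝ := 1 + ∑ g, a g / b g with htdef
  have hdivnn : ∀ g : M.K, 0 ≤ a g / b g := fun g => div_nonneg (hSP.1 g) (hb g).le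
  have htpos : 0 < t := by
    rw [htdef]
    have : (0:ℝ) ≤ ∑ g, a g / b g := Finset.sum_nonneg fun g _ => hdivnn g
    linarith
  set B : M.K → ℝ := t • b with hBdef
  have hBpos : M.Pos B := by
    intro g
    rw [hBdef, Pi.smul_apply, smul_eq_mul]
    exact mul_pos htpos (hb g)
  have haB : a ≤ B := by
    intro g
    rw [hBdef, Pi.smul_apply, smul_eq_mul]
    have h1 : a g / b g ≤ ∑ g', a g' / b g' :=
      Finset.single_le_sum (fun g' _ => hdivnn g') (Finset.mem_univ g)
    have h2 : a g / b g ≤ t := by rw [htdef]; linarith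
    calc a g = (a g / b g) * b g := (div_mul_cancel₀ (a g) (ne_of_gt (hb g))).symm
    _ ≤ t * b g := mul_le_mul_of_nonneg_right h2 (hb g).le
  have h1 : nu' a b = nu' a B := (hext.2.2 a b t hSP.1 hb htpos).symm
  have h2 : nu' a B = M.nu a B := hext.1 a B hSP.1 hBpos haB
  have hdecomp := decomp_K hA hAg hext hSP.1 hBpos haB
  have hnuval : ∀ l', M.nu a B l' = M.rho 2 ![a, B - a] 0 l' - M.agg a l' := fun l' => rfl
  have Facts := fun h => T_l hC hND hI hext hP1 hSP hBpos haB h l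
  have hval_l : (v + nu' a b) l
      = (v l - M.agg a l) + ∑ h : M.K, M.rho 2 ![Pi.single h (a h), B - Pi.single h (a h)] 0 l := by
    rw [Pi.add_apply, h1, h2, hnuval l, hdecomp, Finset.sum_apply]
    ring
  have hsumnn : (0:ℝ)
      ≤ ∑ h : M.K, M.rho 2 ![Pi.single h (a h), B - Pi.single h (a h)] 0 l :=
    Finset.sum_nonneg fun h _ => (Facts h).1
  have hEiff : (0 < ∑ h : M.K, M.rho 2 ![Pi.single h (a h), B - Pi.single h (a h)] 0 l)
      ↔ ∃ h i j, 0 < a h ∧ M.IsPureIJIndex i j h ∧ j = l := by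
    constructor
    · intro hgt
      by_contra hno
      have hz : ∀ h : M.K, M.rho 2 ![Pi.single h (a h), B - Pi.single h (a h)] 0 l = 0 := by
        intro h'
        rcases ((Facts h').1).lt_or_eq with hlt | heq
        · exfalso
          obtain ⟨i, j, hh⟩ := (Facts h').2.1 hlt
          exact hno ⟨h', i, j, hh⟩
        · exact heq.symm
      rw [Finset.sum_eq_zero (fun h' _ => hz h')] at hgt
      exact lt_irrefl 0 hgt
    · rintro ⟨h', i, j, hh⟩
      have hTh := (Facts h').2.2 ⟨i, j, hh⟩
      exact lt_of_lt_of_le hTh (Finset.single_le_sum (fun g _ => (Facts g).1) (Finset.mem_univ h'))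
  constructor
  · rw [hval_l]
    have := hav l
    have h3 : 0 ≤ v l - M.agg a l := by linarith
    linarith
  · rw [hval_l]
    constructor
    · intro hgt
      by_cases hva : M.agg a l < v l
      · exact Or.inl hva
      · right
        have hv0 : v l - M.agg a l ≤ 0 := by linarith [not_lt.1 hva]
        have : 0 < ∑ h : M.K, M.rho 2 ![Pi.single h (a h), B - Pi.single h (a h)] 0 l := by
          linarith
        exact hEiff.1 this
    · rintro (hva | hE)
      · linarith
      · have := hEiff.2 hE
        have h3 : 0 ≤ v l - M.agg a l := by linarith [hav l]
        linarith

lemma lemL (hC : M.Conserves) (hA : M.Anonymous) (hAg : M.Aggregative)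
    (hI : M.Invariant) (hND : M.NonDissipative)
    {nu' : (M.K → ℝ) → (M.K → ℝ) → Fin m → ℝ} (hext : M.IsNuExtension nu')
    {P : Set M.K} (hP1 : ∀ h ∈ P, ∃ i j, M.IsPureIJIndex i j h)
    {a : M.K → ℝ} (hSP : M.SPoffer P a) {v : Fin m → ℝ} (hav : M.agg a ≤ v)
    {b b' : M.K → ℝ} (hb : M.Pos b) (hb' : M.Pos b') :
    SameSign (v + nu' a b) (v + nu' a b') := by
  intro l
  obtain ⟨hn1, hi1⟩ := sign_char hC hA hAg hI hND hext hP1 hSP hav hb l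
  obtain ⟨hn2, hi2⟩ := sign_char hC hA hAg hI hND hext hP1 hSP hav hb' l
  refine ⟨hi1.trans hi2.symm, ?_⟩
  constructor <;> intro hlt <;> linarith

lemma sameSign_refl (v : Fin m → ℝ) : SameSign v v := fun _ => ⟨Iff.rfl, Iff.rfl⟩

lemma sameSign_trans {u v w : Fin m → ℝ} (h1 : SameSign u v) (h2 : SameSign v w) :
    SameSign u w := fun i => ⟨(h1 i).1.trans (h2 i).1, (h1 i).2.trans (h2 i).2⟩

end Aux5
section Aux6
open ExchangeMechanism
variable {m : ℕ} {M : ExchangeMechanism m}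

lemma agg_scale (lam : Fin m → ℝ) (a : M.K → ℝ) (l : Fin m) :
    M.agg (M.scaleS lam a) l = lam l * M.agg a l := by
  unfold ExchangeMechanism.agg ExchangeMechanism.scaleS
  rw [Finset.mul_sum]
  apply Finset.sum_congr rfl
  intro g hg
  rw [Finset.mem_filter] at hg
  rw [hg.2]

lemma nu_scale (hI : M.Invariant) {a B : M.K → ℝ} (ha : M.Nonneg a) (hB : M.Pos B)
    (hle : a ≤ B) {lam : Fin m → ℝ} (hlam : ∀ i, 0 < lam i) (l : Fin m) :
    M.nu (M.scaleS lam a) (M.scaleS lam B) l = lam l * M.nu a B l := by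
  have hval : M.Valid 2 ![a, B - a] := by
    apply valid_two' ha (show M.Nonneg (B - a) from fun g => sub_nonneg.2 (hle g))
    have : a + (B - a) = B := by abel
    rw [this]; exact hB
  have hinv := hI 2 ![a, B - a] lam hlam hval
  have hcomp : (fun k => M.scaleS lam (![a, B - a] k))
      = ![M.scaleS lam a, M.scaleS lam B - M.scaleS lam a] := by
    funext k
    fin_cases k
    · rfl
    · show M.scaleS lam (B - a) = M.scaleS lam B - M.scaleS lam a
      funext g
      show lam (M.ind g) * (B g - a g) = lam (M.ind g) * B g - lam (M.ind g) * a g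
      ring
  rw [hcomp] at hinv
  have hr := congrFun (congrFun hinv 0) l
  show M.rho 2 ![M.scaleS lam a, M.scaleS lam B - M.scaleS lam a] 0 l
      - M.agg (M.scaleS lam a) l = lam l * (M.rho 2 ![a, B - a] 0 l - M.agg a l)
  rw [hr, agg_scale]
  ring

lemma spoffer_scale {P : Set M.K} {a : M.K → ℝ} (hSP : M.SPoffer P a)
    {lam : Fin m → ℝ} (hlam : ∀ i, 0 < lam i) : M.SPoffer P (M.scaleS lam a) := by
  constructor
  · intro g; exact mul_nonneg (hlam _).le (hSP.1 g)
  · intro g hg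
    show lam (M.ind g) * a g = 0
    rw [hSP.2 g hg, mul_zero]

end Aux6
section Aux7
open ExchangeMechanism
variable {m : ℕ} {M : ExchangeMechanism m}

lemma mul_sign_iff {c x : ℝ} (hc : 0 < c) :
    (0 < c * x ↔ 0 < x) ∧ (c * x < 0 ↔ x < 0) := by
  constructor
  · exact ⟨fun h => by nlinarith, fun h => mul_pos hc h⟩
  · exact ⟨fun h => by nlinarith, fun h => mul_neg_of_pos_of_neg hc h⟩

lemma agg_nonneg {a : M.K → ℝ} (ha : M.Nonneg a) (l : Fin m) : 0 ≤ M.agg a l :=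
  Finset.sum_nonneg fun g _ => ha g

lemma exists_dominating {a : M.K → ℝ} (ha : M.Nonneg a) :
    ∃ t : ℝ, 0 < t ∧ ∀ g, a g ≤ t := by
  refine ⟨1 + ∑ g, a g, ?_, ?_⟩
  · have : (0:ℝ) ≤ ∑ g, a g := Finset.sum_nonneg fun g _ => ha g
    linarith
  · intro g
    have : a g ≤ ∑ g', a g' := Finset.single_le_sum (fun g' _ => ha g') (Finset.mem_univ g)
    linarith

end Aux7

/-- Lemma on sign conversions.  Let `M ∈ 𝔐(m)` with extended net-trade
function `ν` and let `v, w ∈ ℝ₊^m`.  The following are equivalent: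
(1) there is `a ∈ S_P(v)` with `v + ν(a,b) ∈ ⟨w⟩` for SOME `b ∈ S₊`;
(2) there is `a ∈ S_P(v)` with `v + ν(a,b) ∈ ⟨w⟩` for ALL `b ∈ S₊`;
(3) for each `u ∈ ⟨v⟩` there is `a ∈ S_P(u)` with `u + ν(a,b) ∈ ⟨w⟩` for all `b ∈ S₊`. -/
theorem sign_conversion_tfae {m : ℕ} (M : ExchangeMechanism m)
    (nu' : (M.K → ℝ) → (M.K → ℝ) → Fin m → ℝ) (hM : M.MemM nu')
    (P : Set M.K) (hP : M.IsPureSelection P)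
    (v w : Fin m → ℝ) (hv : ∀ i, 0 ≤ v i) (hw : ∀ i, 0 ≤ w i) :
    ((∃ a, M.SPofferLe P v a ∧ ∃ b, M.Pos b ∧ SameSign (v + nu' a b) w) ↔
      (∃ a, M.SPofferLe P v a ∧ ∀ b, M.Pos b → SameSign (v + nu' a b) w)) ∧
    ((∃ a, M.SPofferLe P v a ∧ ∀ b, M.Pos b → SameSign (v + nu' a b) w) ↔
      (∀ u, SameSign u v →
        ∃ a, M.SPofferLe P u a ∧ ∀ b, M.Pos b → SameSign (u + nu' a b) w)) := by
  obtain ⟨hC, hA, hAg, hI, hND, hFlex, hext, hConn⟩ := hM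
  have hP1 := hP.1
  have honep : M.Pos (fun _ => (1:ℝ)) := fun _ => one_pos
  constructor
  · constructor
    · rintro ⟨a, hale, b0, hb0, hss⟩
      refine ⟨a, hale, fun b hb => ?_⟩
      exact sameSign_trans (lemL hC hA hAg hI hND hext hP1 hale.1 hale.2 hb hb0) hss
    · rintro ⟨a, hale, hall⟩
      exact ⟨a, hale, fun _ => (1:ℝ), honep, hall _ honep⟩
  · constructor
    · rintro ⟨a, hale, hall⟩ u hu
      obtain ⟨hSP, hav⟩ := hale
      have hu0 : ∀ i, ¬(0 < v i) → u i = 0 := by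
        intro i hvi
        have h1 : ¬(0 < u i) := fun hc => hvi (((hu i).1).1 hc)
        have h2 : ¬(u i < 0) := by
          intro hc
          have := ((hu i).2).1 hc
          have := hv i
          linarith
        linarith [not_lt.1 h1, not_lt.1 h2]
      set lam : Fin m → ℝ := fun i => if 0 < v i then u i / v i else 1 with hlamdef
      have hlam : ∀ i, 0 < lam i := by
        intro i
        rw [hlamdef]
        dsimp only
        split
        · rename_i hvi
          exact div_pos (((hu i).1).2 hvi) hvi
        · exact one_pos
      set a' : M.K → ℝ := M.scaleS lam a with ha'def
      have hSP' : M.SPoffer P a' := spoffer_scale hSP hlam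
      have hagg' : M.agg a' ≤ u := by
        intro i
        rw [ha'def, agg_scale]
        by_cases hvi : 0 < v i
        · have hclam : lam i = u i / v i := by rw [hlamdef]; exact if_pos hvi
          have h1 : M.agg a i ≤ v i := hav i
          have h2 : (0:ℝ) ≤ u i / v i := (div_pos (((hu i).1).2 hvi) hvi).le
          calc lam i * M.agg a i ≤ lam i * v i := by
                rw [hclam]; exact mul_le_mul_of_nonneg_left h1 h2
          _ = u i := by rw [hclam]; exact div_mul_cancel₀ (u i) (ne_of_gt hvi)
        · have hv0 : v i = 0 := le_antisymm (not_lt.1 hvi) (hv i)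
          have hagg0 : M.agg a i = 0 := by
            have h1 := hav i
            have h2 := agg_nonneg hSP.1 i
            rw [hv0] at h1
            linarith
          rw [hagg0, mul_zero, hu0 i hvi]
      obtain ⟨t, ht, htd⟩ := exists_dominating hSP.1
      set B : M.K → ℝ := fun _ => t with hBdef
      have hBpos : M.Pos B := fun _ => ht
      have haB : a ≤ B := fun g => htd g
      have hssB : SameSign (v + nu' a B) w := hall B hBpos
      have hnuB : nu' a B = M.nu a B := hext.1 a B hSP.1 hBpos haB
      set B' : M.K → ℝ := M.scaleS lam B with hB'def
      have hB'pos : M.Pos B' := fun g => mul_pos (hlam _) (hBpos g)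
      have ha'B' : a' ≤ B' := by
        intro g
        exact mul_le_mul_of_nonneg_left (haB g) (hlam _).le
      have hnu' : nu' a' B' = M.nu a' B' := hext.1 a' B' hSP'.1 hB'pos ha'B'
      have hscale : ∀ l, M.nu a' B' l = lam l * M.nu a B l :=
        nu_scale hI hSP.1 hBpos haB hlam
      have hssB' : SameSign (u + nu' a' B') w := by
        intro l
        have hw' := hssB l
        rw [Pi.add_apply, hnuB] at hw'
        have hval : (u + nu' a' B') l = u l + lam l * M.nu a B l := by
          rw [Pi.add_apply, hnu', hscale l]
        by_cases hvi : 0 < v l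
        · have hclam : lam l = u l / v l := by rw [hlamdef]; exact if_pos hvi
          have hc : lam l * v l = u l := by
            rw [hclam]; exact div_mul_cancel₀ (u l) (ne_of_gt hvi)
          have hval2 : (u + nu' a' B') l = lam l * (v l + M.nu a B l) := by
            rw [hval, mul_add, hc]
          have hms := mul_sign_iff (x := v l + M.nu a B l) (hlam l)
          rw [hval2]
          exact ⟨hms.1.trans hw'.1, hms.2.trans hw'.2⟩
        · have hv0 : v l = 0 := le_antisymm (not_lt.1 hvi) (hv l)
          have hclam : lam l = 1 := by rw [hlamdef]; exact if_neg hvi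
          have hval2 : (u + nu' a' B') l = v l + M.nu a B l := by
            rw [hval, hclam, one_mul, hu0 l hvi, hv0, zero_add]
          rw [hval2]
          exact hw'
      refine ⟨a', ⟨hSP', hagg'⟩, fun b hb => ?_⟩
      exact sameSign_trans (lemL hC hA hAg hI hND hext hP1 hSP' hagg' hb hB'pos) hssB'
    · intro h3
      exact h3 v (sameSign_refl v)
end

section
/- Uniqueness of exchange ratios: Let M ∈ 𝔐(m), b ∈ S₊, and i ≠ j. If a′ and a″ achieve ij-exchange ratios α′ and α″ at b — that is, ν(a′,b) = −e_i + α′·e_j and ν(a″,b) = −e_i + α″·e_j with all other components zero and α′, α″ > 0 — then α′ = α″. -/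
open Finset

section AuxiliaryLemmas

open ExchangeMechanism

variable {m : ℕ} (M : ExchangeMechanism m)

private lemma er_sum_two (a c : M.K → ℝ) : (∑ k : Fin 2, (![a, c] : Fin 2 → M.K → ℝ) k) = a + c := by
  simp [Fin.sum_univ_two]

private lemma er_valid_two {a c : M.K → ℝ} (ha : M.Nonneg a) (hc : M.Nonneg c)
    (hpos : M.Pos (a + c)) : M.Valid 2 ![a, c] := by
  constructor
  · intro k
    fin_cases k
    · simpa using ha
    · simpa using hc
  · rw [er_sum_two]; exact hpos

private lemma er_two_trader (hA : M.Anonymous) (hC : M.Conserves) {a c : M.K → ℝ}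
    (ha : M.Nonneg a) (hc : M.Nonneg c) (hpos : M.Pos (a + c)) :
    M.rho 2 ![a, c] 0 + M.rho 2 ![c, a] 0 = M.agg a + M.agg c := by
  have hv : M.Valid 2 ![a, c] := er_valid_two M ha hc hpos
  have hcons := hC 2 ![a, c] hv
  have hswap := hA 2 ![a, c] (Equiv.swap 0 1) hv
  have hcomp : ((![a, c] : Fin 2 → M.K → ℝ) ∘ (Equiv.swap (0 : Fin 2) 1)) = ![c, a] := by
    funext k; fin_cases k <;> simp
  rw [hcomp] at hswap
  have h1 : M.rho 2 ![c, a] 0 = M.rho 2 ![a, c] 1 := by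
    rw [hswap]; simp
  rw [h1]
  have h2 : (∑ k : Fin 2, M.rho 2 ![a, c] k) = M.rho 2 ![a, c] 0 + M.rho 2 ![a, c] 1 := by
    simp [Fin.sum_univ_two]
  have h3 : (∑ k : Fin 2, M.agg ((![a, c] : Fin 2 → M.K → ℝ) k)) = M.agg a + M.agg c := by
    simp [Fin.sum_univ_two]
  rw [← h2, ← h3, hcons]

private lemma er_agg3 (hAg : M.Aggregative) {a₀ a₁ a₂ : M.K → ℝ}
    (hv : M.Valid 3 ![a₀, a₁, a₂]) :
    M.rho 3 ![a₀, a₁, a₂] 0 = M.rho 2 ![a₀, a₁ + a₂] 0 := by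
  have h := hAg 1 ![a₀, a₁, a₂] hv
  have hprof : (Fin.snoc (fun k : Fin 1 => (![a₀, a₁, a₂] : Fin 3 → M.K → ℝ) k.castSucc.castSucc)
      ((![a₀, a₁, a₂] : Fin 3 → M.K → ℝ) (Fin.castSucc (Fin.last 1)) +
        (![a₀, a₁, a₂] : Fin 3 → M.K → ℝ) (Fin.last 2)) : Fin 2 → M.K → ℝ) = ![a₀, a₁ + a₂] := by
    funext k; fin_cases k <;> simp [Fin.snoc, Fin.last]
  rw [hprof] at h
  have h0 := congrFun h 0
  have hz : (0 : Fin 2) = Fin.castSucc 0 := rfl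
  rw [hz, Fin.snoc_castSucc] at h0
  have hz3 : ((0 : Fin 1).castSucc.castSucc : Fin 3) = 0 := rfl
  rw [hz3] at h0
  exact h0.symm

private lemma er_valid_three {a₀ a₁ a₂ : M.K → ℝ} (h₀ : M.Nonneg a₀) (h₁ : M.Nonneg a₁)
    (h₂ : M.Nonneg a₂) (hpos : M.Pos (a₀ + a₁ + a₂)) : M.Valid 3 ![a₀, a₁, a₂] := by
  constructor
  · intro k
    fin_cases k
    · simpa using h₀
    · simpa using h₁
    · simpa using h₂
  · have : (∑ k : Fin 3, (![a₀, a₁, a₂] : Fin 3 → M.K → ℝ) k) = a₀ + a₁ + a₂ := by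
      simp [Fin.sum_univ_three]
    rw [this]; exact hpos

private lemma er_three_trader_one (hA : M.Anonymous) (hAg : M.Aggregative)
    {a₀ a₁ a₂ : M.K → ℝ} (h₀ : M.Nonneg a₀) (h₁ : M.Nonneg a₁) (h₂ : M.Nonneg a₂)
    (hpos : M.Pos (a₀ + a₁ + a₂)) :
    M.rho 3 ![a₀, a₁, a₂] 1 = M.rho 2 ![a₁, a₀ + a₂] 0 := by
  have hv : M.Valid 3 ![a₀, a₁, a₂] := er_valid_three M h₀ h₁ h₂ hpos
  have hswap := hA 3 ![a₀, a₁, a₂] (Equiv.swap 0 1) hv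
  have hcomp : ((![a₀, a₁, a₂] : Fin 3 → M.K → ℝ) ∘ (Equiv.swap (0 : Fin 3) 1)) = ![a₁, a₀, a₂] := by
    funext k; fin_cases k <;> simp [Equiv.swap_apply_of_ne_of_ne]
  rw [hcomp] at hswap
  have hv' : M.Valid 3 ![a₁, a₀, a₂] := by
    refine er_valid_three M h₁ h₀ h₂ ?_
    intro h
    have := hpos h
    simpa [add_comm, add_left_comm, add_assoc] using this
  have h1 : M.rho 3 ![a₀, a₁, a₂] 1 = M.rho 3 ![a₁, a₀, a₂] 0 := by
    rw [hswap]; simp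
  rw [h1, er_agg3 M hAg hv']

end AuxiliaryLemmas

private lemma exchange_ratio_le {m : ℕ} (M : ExchangeMechanism m)
    (nu' : (M.K → ℝ) → (M.K → ℝ) → Fin m → ℝ) (hM : M.MemM nu')
    (b : M.K → ℝ) (hb : M.Pos b) (i j : Fin m) (hij : i ≠ j)
    (a' a'' : M.K → ℝ) (ha' : M.Nonneg a') (ha'' : M.Nonneg a'')
    (α' α'' : ℝ)
    (hnu' : nu' a' b = (-1 : ℝ) • (Pi.single i 1 : Fin m → ℝ) + α' • (Pi.single j 1 : Fin m → ℝ))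
    (hnu'' : nu' a'' b = (-1 : ℝ) • (Pi.single i 1 : Fin m → ℝ) + α'' • (Pi.single j 1 : Fin m → ℝ)) :
    α' ≤ α'' := by
  obtain ⟨hC, hA, hAg, hInv, hND, hF, ⟨hext1, hext2, hext3⟩, hConn⟩ := hM
  -- choose a large scale s
  set s : ℝ := 1 + ∑ h, (a' h + a'' h) / b h with hs_def
  have hterm : ∀ h : M.K, 0 ≤ (a' h + a'' h) / b h := fun h =>
    div_nonneg (add_nonneg (ha' h) (ha'' h)) (le_of_lt (hb h))
  have hs_pos : 0 < s := by
    rw [hs_def]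
    have hnn : (0:ℝ) ≤ ∑ h : M.K, (a' h + a'' h) / b h :=
      Finset.sum_nonneg (fun k _ => hterm k)
    linarith
  have hs_ge : ∀ h : M.K, a' h + a'' h ≤ s * b h := by
    intro h
    have h1 : (a' h + a'' h) / b h ≤ s := by
      have := Finset.single_le_sum (f := fun h => (a' h + a'' h) / b h)
        (fun k _ => hterm k) (Finset.mem_univ h)
      linarith
    have h2 := mul_le_mul_of_nonneg_right h1 (le_of_lt (hb h))
    rwa [div_mul_cancel₀ _ (ne_of_gt (hb h))] at h2
  have hs_ge' : ∀ h : M.K, a' h ≤ s * b h := fun h => le_trans (by linarith [ha'' h]) (hs_ge h)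
  have hs_ge'' : ∀ h : M.K, a'' h ≤ s * b h := fun h => le_trans (by linarith [ha' h]) (hs_ge h)
  -- the offers
  set d : M.K → ℝ := fun h => s * b h - a'' h with hd_def
  set e : M.K → ℝ := fun h => s * b h + a'' h - a' h with he_def
  have hd_nn : M.Nonneg d := by
    intro h
    have hdh : d h = s * b h - a'' h := rfl
    rw [hdh]
    linarith [hs_ge'' h]
  have he_nn : M.Nonneg e := by
    intro h
    have heh : e h = s * b h + a'' h - a' h := rfl
    rw [heh]
    linarith [hs_ge' h, ha'' h]
  set B : M.K → ℝ := fun h => 2 * s * b h with hB_def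
  have hB_eq : B = (2 * s) • b := by funext h; simp [hB_def, mul_assoc]
  have hB_pos : M.Pos B := by
    intro h
    have hBh : B h = 2 * s * b h := rfl
    rw [hBh]
    nlinarith [hb h, hs_pos]
  have hsb_pos : M.Pos (s • b) := by
    intro h
    have : (s • b) h = s * b h := rfl
    rw [this]
    exact mul_pos hs_pos (hb h)
  -- identification of trade values with nu'
  -- trader 1: net trade of a' at B
  have h_nu_a' : M.nu a' B = nu' a' b := by
    have h1 : nu' a' B = nu' a' b := by
      rw [hB_eq]; exact hext3 a' b (2 * s) ha' hb (by linarith)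
    rw [← h1]
    refine (hext1 a' B ha' hB_pos (fun h => ?_)).symm
    have hBh : B h = 2 * s * b h := rfl
    rw [hBh]
    nlinarith [hs_ge' h, hb h, hs_pos]
  -- trader 2: net trade of d at B equals minus that of a''
  have h_nu_d_sb : M.nu d (s • b) = M.agg a'' - M.trade a'' (s • b) := by
    have hsum : a'' + d = s • b := by
      funext h
      have hdh : d h = s * b h - a'' h := rfl
      have hsb : (s • b) h = s * b h := rfl
      simp only [Pi.add_apply, hdh, hsb]
      ring
    have htt := er_two_trader M hA hC ha'' hd_nn (by rw [hsum]; exact hsb_pos)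
    have hx1 : (s • b : M.K → ℝ) - a'' = d := by
      funext h
      have hdh : d h = s * b h - a'' h := rfl
      have hsb : (s • b) h = s * b h := rfl
      simp only [Pi.sub_apply, hdh, hsb]
    have hx2 : (s • b : M.K → ℝ) - d = a'' := by
      funext h
      have hdh : d h = s * b h - a'' h := rfl
      have hsb : (s • b) h = s * b h := rfl
      simp only [Pi.sub_apply, hdh, hsb]
      ring
    have h1 : M.trade a'' (s • b) = M.rho 2 ![a'', d] 0 := by
      unfold ExchangeMechanism.trade ExchangeMechanism.ret
      rw [hx1]
    have h2 : M.trade d (s • b) = M.rho 2 ![d, a''] 0 := by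
      unfold ExchangeMechanism.trade ExchangeMechanism.ret
      rw [hx2]
    unfold ExchangeMechanism.nu
    rw [h2, h1]
    funext k
    have hk := congrFun htt k
    simp only [Pi.add_apply, Pi.sub_apply] at hk ⊢
    linarith
  have h_nu_d : M.nu d B = -nu' a'' b := by
    have hd_le_sb : d ≤ s • b := by
      intro h
      have hdh : d h = s * b h - a'' h := rfl
      have hsb : (s • b) h = s * b h := rfl
      rw [hdh, hsb]
      linarith [ha'' h]
    have h1 : M.nu d (s • b) = nu' d (s • b) := (hext1 d (s • b) hd_nn hsb_pos hd_le_sb).symm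
    have h2 : nu' d (s • b) = nu' d b := hext3 d b s hd_nn hb hs_pos
    have h3 : nu' d B = nu' d b := by rw [hB_eq]; exact hext3 d b (2 * s) hd_nn hb (by linarith)
    have hd_le_B : d ≤ B := by
      intro h
      have hdh : d h = s * b h - a'' h := rfl
      have hBh : B h = 2 * s * b h := rfl
      rw [hdh, hBh]
      nlinarith [ha'' h, hs_pos, hb h]
    have h4 : M.nu d B = nu' d B := (hext1 d B hd_nn hB_pos hd_le_B).symm
    have h5 : M.nu d B = M.nu d (s • b) := by rw [h4, h3, ← h2, ← h1]
    rw [h5, h_nu_d_sb]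
    -- M.agg a'' - M.trade a'' (s•b) = -(M.trade a'' (s•b) - M.agg a'') = - M.nu a'' (s•b)
    have h6 : M.nu a'' (s • b) = nu' a'' b := by
      have ha''_le : a'' ≤ s • b := by
        intro h
        have hsb : (s • b) h = s * b h := rfl
        rw [hsb]
        exact hs_ge'' h
      rw [← hext3 a'' b s ha'' hb hs_pos]
      exact (hext1 a'' (s • b) ha'' hsb_pos ha''_le).symm
    have h7 : M.nu a'' (s • b) = M.trade a'' (s • b) - M.agg a'' := rfl
    rw [← h6, h7]
    funext k; simp only [Pi.sub_apply, Pi.neg_apply]; ring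
  -- the three-trader game
  have hsum3 : a' + d + e = B := by
    funext h
    have hdh : d h = s * b h - a'' h := rfl
    have heh : e h = s * b h + a'' h - a' h := rfl
    have hBh : B h = 2 * s * b h := rfl
    simp only [Pi.add_apply, hdh, heh, hBh]
    ring
  have hpos3 : M.Pos (a' + d + e) := by rw [hsum3]; exact hB_pos
  have hv3 : M.Valid 3 ![a', d, e] := er_valid_three M ha' hd_nn he_nn hpos3
  -- trader 0's return
  have hr0 : M.rho 3 ![a', d, e] 0 = M.trade a' B := by
    rw [er_agg3 M hAg hv3]
    unfold ExchangeMechanism.trade ExchangeMechanism.ret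
    have hx : (B : M.K → ℝ) - a' = d + e := by
      funext h
      have hdh : d h = s * b h - a'' h := rfl
      have heh : e h = s * b h + a'' h - a' h := rfl
      have hBh : B h = 2 * s * b h := rfl
      simp only [Pi.sub_apply, Pi.add_apply, hdh, heh, hBh]
      ring
    rw [hx]
  -- trader 1's return
  have hr1 : M.rho 3 ![a', d, e] 1 = M.trade d B := by
    rw [er_three_trader_one M hA hAg ha' hd_nn he_nn hpos3]
    unfold ExchangeMechanism.trade ExchangeMechanism.ret
    have hx : (B : M.K → ℝ) - d = a' + e := by
      funext h
      have hdh : d h = s * b h - a'' h := rfl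
      have heh : e h = s * b h + a'' h - a' h := rfl
      have hBh : B h = 2 * s * b h := rfl
      simp only [Pi.sub_apply, Pi.add_apply, hdh, heh, hBh]
      ring
    rw [hx]
  -- conservation in the three-trader game
  have hcons := hC 3 ![a', d, e] hv3
  have hcons' : M.rho 3 ![a', d, e] 0 + M.rho 3 ![a', d, e] 1 + M.rho 3 ![a', d, e] 2
      = M.agg a' + M.agg d + M.agg e := by
    have h2 : (∑ k : Fin 3, M.rho 3 ![a', d, e] k)
        = M.rho 3 ![a', d, e] 0 + M.rho 3 ![a', d, e] 1 + M.rho 3 ![a', d, e] 2 := by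
      simp [Fin.sum_univ_three]
    have h3 : (∑ k : Fin 3, M.agg ((![a', d, e] : Fin 3 → M.K → ℝ) k))
        = M.agg a' + M.agg d + M.agg e := by
      simp [Fin.sum_univ_three]
    rw [← h2, ← h3, hcons]
  -- trader 2's net trade
  have hnet2 : M.rho 3 ![a', d, e] 2 - M.agg e = (α'' - α') • (Pi.single j 1 : Fin m → ℝ) := by
    have hA' : M.rho 3 ![a', d, e] 0 = M.nu a' B + M.agg a' := by
      rw [hr0]; unfold ExchangeMechanism.nu; funext k; simp
    have hD' : M.rho 3 ![a', d, e] 1 = M.nu d B + M.agg d := by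
      rw [hr1]; unfold ExchangeMechanism.nu; funext k; simp
    rw [hA', hD'] at hcons'
    rw [h_nu_a', hnu'] at hcons'
    rw [h_nu_d, hnu''] at hcons'
    funext k
    have hk := congrFun hcons' k
    simp only [Pi.add_apply, Pi.sub_apply, Pi.neg_apply, Pi.smul_apply, smul_eq_mul] at hk ⊢
    linarith
  -- non-dissipation for trader 2
  have hnd := hND 3 ![a', d, e] hv3 2
  have hG2 : (![a', d, e] : Fin 3 → M.K → ℝ) 2 = e := by simp
  rw [hG2] at hnd
  rcases hnd with hz | ⟨k, hk⟩
  · -- net trade zero: α'' = α'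
    have := congrFun hnet2 j
    rw [hz] at this
    simp only [Pi.sub_apply, sub_self, Pi.smul_apply, smul_eq_mul, Pi.single_eq_same,
      mul_one] at this
    linarith
  · -- positive component at k: must be j, and α' < α''
    have hkk := congrFun hnet2 k
    simp only [Pi.sub_apply, Pi.smul_apply, smul_eq_mul] at hkk
    by_cases hkj : k = j
    · subst hkj
      simp only [Pi.single_eq_same, mul_one] at hkk
      linarith
    · rw [Pi.single_eq_of_ne hkj, mul_zero] at hkk
      linarith


/-- Uniqueness of exchange ratios.  Let `M ∈ 𝔐(m)`, `b ∈ S₊`, and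
`i ≠ j`.  If `a′` and `a″` achieve `ij`-exchange ratios `α′` and `α″` at `b` — that is,
`ν(a′,b) = −e_i + α′·e_j` and `ν(a″,b) = −e_i + α″·e_j` with all other components zero and
`α′, α″ > 0` — then `α′ = α″`. -/
theorem exchange_ratio_unique {m : ℕ} (M : ExchangeMechanism m)
    (nu' : (M.K → ℝ) → (M.K → ℝ) → Fin m → ℝ) (hM : M.MemM nu')
    (b : M.K → ℝ) (hb : M.Pos b) (i j : Fin m) (hij : i ≠ j)
    (a' a'' : M.K → ℝ) (ha' : M.Nonneg a') (ha'' : M.Nonneg a'')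
    (α' α'' : ℝ) (hα' : 0 < α') (hα'' : 0 < α'')
    (hnu' : nu' a' b = (-1 : ℝ) • (Pi.single i 1 : Fin m → ℝ) + α' • (Pi.single j 1 : Fin m → ℝ))
    (hnu'' : nu' a'' b = (-1 : ℝ) • (Pi.single i 1 : Fin m → ℝ) + α'' • (Pi.single j 1 : Fin m → ℝ)) :
    α' = α'' := by
  exact le_antisymm
    (exchange_ratio_le M nu' hM b hb i j hij a' a'' ha' ha'' α' α'' hnu' hnu'')
    (exchange_ratio_le M nu' hM b hb i j hij a'' a' ha'' ha' α'' α' hnu'' hnu')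
end

section
/- Let G be a connected directed graph without loops on vertex set {1,…,m}, and let b = (b_ij) be a nonnegative m×m matrix with b_ij > 0 for every edge ij ∈ G and b_ij = 0 for ij ∉ G. Then there exists a strictly positive vector p ∈ ℝ₊₊^m, unique up to multiplication by a positive scalar, satisfying Σ_i p_i·b_ij = Σ_i p_j·b_ji for all j = 1,…,m. -/
open Finset

section Aux

variable {m : ℕ}

noncomputable def Lmap (b : Fin m → Fin m → ℝ) : (Fin m → ℝ) →ₗ[ℝ] (Fin m → ℝ) where
  toFun p := fun j => (∑ i, p i * b i j) - p j * (∑ i, b j i)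
  map_add' p q := by
    funext j
    simp only [Pi.add_apply, add_mul, Finset.sum_add_distrib]
    ring
  map_smul' c p := by
    funext j
    simp only [Pi.smul_apply, smul_eq_mul, RingHom.id_apply, mul_sub, Finset.mul_sum,
      mul_assoc]

lemma Lmap_apply (b : Fin m → Fin m → ℝ) (p : Fin m → ℝ) (j : Fin m) :
    Lmap b p j = (∑ i, p i * b i j) - p j * (∑ i, b j i) := rfl

lemma sum_Lmap (b : Fin m → Fin m → ℝ) (p : Fin m → ℝ) : ∑ j, Lmap b p j = 0 := by
  simp only [Lmap_apply]
  rw [Finset.sum_sub_distrib, Finset.sum_comm]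
  simp [Finset.mul_sum]

end Aux

/-- Existence and uniqueness of prices for a graphical mechanism.
Let `G` be a connected directed graph without loops on the vertex set `{1,…,m}` (here
`Fin m`; connectedness: for any two distinct vertices there is a directed path, i.e. the
transitive closure relates them), and let `b = (b_ij)` be a nonnegative `m×m` matrix with
`b_ij > 0` for every edge `ij ∈ G` and `b_ij = 0` for `ij ∉ G`.  Then there exists a
strictly positive vector `p ∈ ℝ₊₊^m`, unique up to multiplication by a positive scalar,
satisfying `Σ_i p_i·b_ij = Σ_i p_j·b_ji` for all `j`. -/
theorem graph_price_exists_unique {m : ℕ} (G : Fin m → Fin m → Prop)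
    (hirr : ∀ i, ¬ G i i)
    (hconn : ∀ i j : Fin m, i ≠ j → Relation.TransGen G i j)
    (b : Fin m → Fin m → ℝ)
    (hbpos : ∀ i j, G i j → 0 < b i j) (hb0 : ∀ i j, ¬ G i j → b i j = 0) :
    ∃ p : Fin m → ℝ,
      ((∀ i, 0 < p i) ∧ ∀ j, ∑ i, p i * b i j = ∑ i, p j * b j i) ∧
      ∀ q : Fin m → ℝ,
        ((∀ i, 0 < q i) ∧ ∀ j, ∑ i, q i * b i j = ∑ i, q j * b j i) →
        ∃ c : ℝ, 0 < c ∧ q = c • p := by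
  rcases Nat.eq_zero_or_pos m with hm | hm
  · subst hm
    refine ⟨fun _ => 1, ⟨fun i => i.elim0, fun j => j.elim0⟩, ?_⟩
    intro q _
    exact ⟨1, one_pos, funext fun i => i.elim0⟩
  haveI : Nonempty (Fin m) := ⟨⟨0, hm⟩⟩
  have hbnn : ∀ i j, 0 ≤ b i j := by
    intro i j
    by_cases h : G i j
    · exact (hbpos i j h).le
    · exact le_of_eq (hb0 i j h).symm
  -- equation form
  have heq_iff : ∀ p : Fin m → ℝ,
      (∀ j, ∑ i, p i * b i j = ∑ i, p j * b j i) ↔ Lmap b p = 0 := by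
    intro p
    constructor
    · intro h
      funext j
      rw [Pi.zero_apply, Lmap_apply, sub_eq_zero, h j, Finset.mul_sum]
    · intro h j
      have := congrFun h j
      rw [Pi.zero_apply, Lmap_apply, sub_eq_zero] at this
      rw [this, Finset.mul_sum]
  -- positivity lemma
  have hpos : ∀ p : Fin m → ℝ, (∀ i, 0 ≤ p i) → p ≠ 0 → Lmap b p = 0 → ∀ j, 0 < p j := by
    intro p hnn hne hL
    have hclosed : ∀ i j, 0 < p i → G i j → 0 < p j := by
      intro i j hpi hij
      by_contra h
      push_neg at h
      have hpj : p j = 0 := le_antisymm h (hnn j)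
      have hsum : (∑ i, p i * b i j) = 0 := by
        have := congrFun hL j
        rw [Pi.zero_apply, Lmap_apply, sub_eq_zero] at this
        rw [this, hpj, zero_mul]
      have hterm := (Finset.sum_eq_zero_iff_of_nonneg
        (fun k _ => mul_nonneg (hnn k) (hbnn k j))).mp hsum i (mem_univ i)
      nlinarith [hbpos i j hij]
    obtain ⟨i0, hi0⟩ : ∃ i, p i ≠ 0 := by
      by_contra h; push_neg at h; exact hne (funext fun i => h i)
    have hi0pos : 0 < p i0 := lt_of_le_of_ne (hnn i0) (Ne.symm hi0)
    have key : ∀ a c : Fin m, Relation.TransGen G a c → 0 < p a → 0 < p c := by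
      intro a c h
      induction h with
      | single h => exact fun ha => hclosed _ _ ha h
      | tail _ h ih => exact fun ha => hclosed _ _ (ih ha) h
    intro j
    by_cases hj : j = i0
    · rw [hj]; exact hi0pos
    · exact key i0 j (hconn i0 j (Ne.symm hj)) hi0pos
  -- existence of a nonzero kernel vector
  obtain ⟨p0, hp0ker, hp0ne⟩ : ∃ p0 : Fin m → ℝ, Lmap b p0 = 0 ∧ p0 ≠ 0 := by
    have hker : LinearMap.ker (Lmap (m := m) b) ≠ ⊥ := by
      intro hbot
      set S : (Fin m → ℝ) →ₗ[ℝ] ℝ := ∑ j, LinearMap.proj j with hS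
      have hSne : S ≠ 0 := by
        intro h0
        have h1 : S (fun _ => 1) = (m : ℝ) := by
          simp [hS, LinearMap.sum_apply]
        rw [h0, LinearMap.zero_apply] at h1
        have : m = 0 := Nat.cast_eq_zero.mp h1.symm
        omega
      have hrange : LinearMap.range (Lmap (m := m) b) ≤ LinearMap.ker S := by
        rintro x ⟨p, rfl⟩
        simp only [LinearMap.mem_ker, hS, LinearMap.sum_apply, LinearMap.proj_apply]
        exact sum_Lmap b p
      have hHne : LinearMap.ker S ≠ ⊤ := by
        simp only [ne_eq, LinearMap.ker_eq_top]; exact hSne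
      have h1 : Module.finrank ℝ ↥(LinearMap.ker S) < Module.finrank ℝ (Fin m → ℝ) :=
        Submodule.finrank_lt hHne
      have h2 : Module.finrank ℝ ↥(LinearMap.range (Lmap (m := m) b))
          ≤ Module.finrank ℝ ↥(LinearMap.ker S) := Submodule.finrank_mono hrange
      have h3 := LinearMap.finrank_range_add_finrank_ker (Lmap (m := m) b)
      rw [hbot, finrank_bot, add_zero] at h3
      omega
    obtain ⟨p0, hp0mem, hp0ne⟩ := Submodule.exists_mem_ne_zero_of_ne_bot hker
    exact ⟨p0, hp0mem, hp0ne⟩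
  -- take absolute values
  set p : Fin m → ℝ := fun i => |p0 i| with hpdef
  have hpnn : ∀ i, 0 ≤ p i := fun i => abs_nonneg _
  have hpne : p ≠ 0 := by
    intro h
    apply hp0ne
    funext i
    have := congrFun h i
    simpa [hpdef, abs_eq_zero] using this
  have hpker : Lmap b p = 0 := by
    -- each coordinate of Lmap b p is nonneg and they sum to 0
    have hnn : ∀ j, 0 ≤ Lmap b p j := by
      intro j
      rw [Lmap_apply, sub_nonneg]
      have h1 : p j * (∑ i, b j i) = |p0 j * (∑ i, b j i)| := by
        rw [abs_mul, abs_of_nonneg (Finset.sum_nonneg fun i _ => hbnn j i)]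
      have h2 : p0 j * (∑ i, b j i) = ∑ i, p0 i * b i j := by
        have := congrFun hp0ker j
        rw [Pi.zero_apply, Lmap_apply, sub_eq_zero] at this
        exact this.symm
      rw [h1, h2]
      calc |∑ i, p0 i * b i j| ≤ ∑ i, |p0 i * b i j| := Finset.abs_sum_le_sum_abs _ _
        _ = ∑ i, p i * b i j := by
            refine Finset.sum_congr rfl fun i _ => ?_
            rw [abs_mul, abs_of_nonneg (hbnn i j)]
    have hsum : ∑ j, Lmap b p j = 0 := sum_Lmap b p
    funext j
    have := (Finset.sum_eq_zero_iff_of_nonneg (fun j _ => hnn j)).mp hsum j (mem_univ j)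
    simpa using this
  have hppos : ∀ j, 0 < p j := hpos p hpnn hpne hpker
  refine ⟨p, ⟨hppos, (heq_iff p).mpr hpker⟩, ?_⟩
  -- uniqueness
  rintro q ⟨hqpos, hqeq⟩
  have hqker : Lmap b q = 0 := (heq_iff q).mp hqeq
  obtain ⟨j0, -, hj0⟩ := Finset.exists_min_image Finset.univ (fun j => q j / p j)
    Finset.univ_nonempty
  set c : ℝ := q j0 / p j0 with hc
  have hcpos : 0 < c := div_pos (hqpos j0) (hppos j0)
  set r : Fin m → ℝ := fun i => q i - c * p i with hr
  have hrnn : ∀ i, 0 ≤ r i := by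
    intro i
    have := hj0 i (mem_univ i)
    rw [le_div_iff₀ (hppos i)] at this
    simp only [hr, sub_nonneg]
    linarith
  have hrj0 : r j0 = 0 := by
    show q j0 - q j0 / p j0 * p j0 = 0
    rw [div_mul_cancel₀ _ (hppos j0).ne', sub_self]
  have hrker : Lmap b r = 0 := by
    have : r = q - c • p := by funext i; simp [hr]
    rw [this, map_sub, map_smul, hqker, hpker, smul_zero, sub_zero]
  have hrzero : r = 0 := by
    by_contra hne
    exact absurd (hpos r hrnn hne hrker j0) (by rw [hrj0]; exact lt_irrefl 0)
  refine ⟨c, hcpos, ?_⟩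
  funext i
  have := congrFun hrzero i
  simp only [hr, Pi.zero_apply, sub_eq_zero] at this
  rw [Pi.smul_apply, smul_eq_mul]
  exact this
end

section
/- Let M ∈ 𝔐(m) and let N_b (b ∈ S₊) be its associated column-stochastic matrices. Then: (1) if h ∈ K_i is a pure ij-index, the h-th column of N_b equals the j-th unit vector e_j, independently of b; (2) for every i and every b, each column of N_b indexed by K_i is a linear combination of the columns of N_b indexed by pure indices in K_i. -/
open Finset

/-- Columns of `N_b`.  Let `M ∈ 𝔐(m)` and let `N_b` (`b ∈ S₊`) be its
associated nonnegative column-stochastic matrices, i.e. those representing the trade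
function as `r(a,b) = D_{p(b)}⁻¹·N_b·E_{p(b)}·a`.  Then:
(1) if `h ∈ K_i` is a pure `ij`-index, the `h`-th column of `N_b` equals the `j`-th unit
vector `e_j`, independently of `b`;
(2) for every `i` and every `b`, each column of `N_b` indexed by `K_i` is a linear
combination of the columns of `N_b` indexed by pure indices in `K_i`. -/
theorem columns_of_Nb {m : ℕ} (M : ExchangeMechanism m)
    (nu' : (M.K → ℝ) → (M.K → ℝ) → Fin m → ℝ) (hM : M.MemM nu')
    (p : (M.K → ℝ) → Fin m → ℝ)
    (hppos : ∀ b, M.Pos b → ∀ i, 0 < p b i)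
    (hpval : ∀ a b, M.Nonneg a → M.Pos b → ∑ i, p b i * nu' a b i = 0)
    (N : (M.K → ℝ) → Fin m → M.K → ℝ)
    (hNpos : ∀ b, M.Pos b → ∀ i h, 0 ≤ N b i h)
    (hNstoch : ∀ b, M.Pos b → ∀ h, ∑ i, N b i h = 1)
    (hNret : ∀ a b, M.Nonneg a → M.Pos b → a ≤ b → ∀ i,
      M.trade a b i = (p b i)⁻¹ * ∑ h : M.K, N b i h * (p b (M.ind h) * a h)) :
    (∀ (i j : Fin m) (h : M.K), M.IsPureIJIndex i j h →
      ∀ b, M.Pos b → ∀ i' : Fin m, N b i' h = if i' = j then 1 else 0) ∧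
    (∀ (i : Fin m) (b : M.K → ℝ), M.Pos b → ∀ h : M.K, M.ind h = i →
      ∃ coef : M.K → ℝ,
        (∀ h', coef h' ≠ 0 → M.ind h' = i ∧ ∃ j, M.IsPureIJIndex i j h') ∧
        ∀ i' : Fin m, N b i' h = ∑ h' : M.K, coef h' * N b i' h') := by

  classical
  obtain ⟨-, -, -, hInv, -, hFlex, -, -⟩ := hM
  -- Key scaling lemma: the trade at the offer `b h • e_h` is a positive multiple of
  -- the return to the unit offer `e_h` against a suitable admissible counter-offer.
  have key : ∀ b : M.K → ℝ, M.Pos b → ∀ h : M.K, ∃ a' : M.K → ℝ,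
      M.Valid 2 ![M.unit h, a'] ∧
      ∀ i' : Fin m, M.trade (b h • M.unit h) b i' =
        (if i' = M.ind h then b h else 1) * M.ret (M.unit h) a' i' := by
    intro b hb h
    have hu : ∀ h', M.unit h h' = if h' = h then 1 else 0 := fun h' => Pi.single_apply h 1 h'
    set lam : Fin m → ℝ := fun k => if k = M.ind h then b h else 1 with hlamdef
    have hlam : ∀ k, 0 < lam k := by
      intro k; simp only [hlamdef]
      split
      · exact hb h
      · exact one_pos
    set a' : M.K → ℝ := fun h' => (lam (M.ind h'))⁻¹ * (b h' - b h * M.unit h h') with ha'def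
    have hsub : ∀ h', 0 ≤ b h' - b h * M.unit h h' := by
      intro h'
      by_cases e : h' = h
      · subst e; simp [hu]
      · simp [hu, e]; exact (hb h').le
    have ha'nn : ∀ h', 0 ≤ a' h' := by
      intro h'
      exact mul_nonneg (inv_nonneg.mpr (hlam _).le) (hsub h')
    have hvalid' : M.Valid 2 ![M.unit h, a'] := by
      constructor
      · intro k
        fin_cases k
        · intro h'; simp [hu]; split <;> norm_num
        · intro h'; exact ha'nn h'
      · intro h'
        have hsum : (∑ k : Fin 2, ![M.unit h, a'] k) h' = M.unit h h' + a' h' := by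
          rw [Fin.sum_univ_two]; rfl
        rw [hsum]
        by_cases e : h' = h
        · have : (0:ℝ) < 1 + a' h' := by have := ha'nn h'; linarith
          simpa [hu, e] using this
        · have hlt : 0 < a' h' := by
            have : 0 < b h' - b h * M.unit h h' := by simp [hu, e]; exact hb h'
            exact mul_pos (inv_pos.mpr (hlam _)) this
          have h0 : M.unit h h' = 0 := by simp [hu, e]
          rw [h0]; linarith
    have hsc : (fun k => M.scaleS lam (![M.unit h, a'] k)) =
        ![b h • M.unit h, b - b h • M.unit h] := by
      funext k
      fin_cases k
      · funext h'
        by_cases e : h' = h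
        · subst e
          simp [ExchangeMechanism.scaleS, hu, hlamdef]
        · simp [ExchangeMechanism.scaleS, hu, e]
      · funext h'
        show M.scaleS lam a' h' = (b - b h • M.unit h) h'
        simp only [ExchangeMechanism.scaleS, ha'def, Pi.sub_apply, Pi.smul_apply,
          smul_eq_mul]
        rw [← mul_assoc, mul_inv_cancel₀ (hlam _).ne', one_mul]
    refine ⟨a', hvalid', ?_⟩
    intro i'
    have hInv' := hInv 2 ![M.unit h, a'] lam hlam hvalid'
    rw [hsc] at hInv'
    show M.rho 2 ![b h • M.unit h, b - b h • M.unit h] 0 i' = _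
    rw [hInv']
    rfl
  -- Reading off the column of `N_b` from the trade at `b h • e_h`.
  have keyN : ∀ b : M.K → ℝ, M.Pos b → ∀ (h : M.K) (i' : Fin m),
      M.trade (b h • M.unit h) b i' = (p b i')⁻¹ * (N b i' h * (p b (M.ind h) * b h)) := by
    intro b hb h i'
    have hu : ∀ h', M.unit h h' = if h' = h then 1 else 0 := fun h' => Pi.single_apply h 1 h'
    have hnn : M.Nonneg (b h • M.unit h) := by
      intro h'
      by_cases e : h' = h <;> simp [hu, e, (hb h).le]
    have hle : b h • M.unit h ≤ b := by
      intro h'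
      by_cases e : h' = h <;> simp [hu, e, (hb h').le]
    have hr := hNret _ b hnn hb hle i'
    rw [hr]
    congr 1
    rw [Finset.sum_eq_single h]
    · simp [hu]
    · intro h' _ hne
      simp [hu, hne]
    · simp
  -- Part (1)
  have P1 : ∀ (i j : Fin m) (h : M.K), M.IsPureIJIndex i j h →
      ∀ b, M.Pos b → ∀ i' : Fin m, N b i' h = if i' = j then 1 else 0 := by
    intro i j h hpure b hb
    obtain ⟨a', hval', htr⟩ := key b hb h
    have hzero : ∀ k, k ≠ j → N b k h = 0 := by
      intro k hk
      have h1 := keyN b hb h k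
      rw [htr k, hpure.2 a' hval' k hk, mul_zero] at h1
      have h2 : N b k h * (p b (M.ind h) * b h) = 0 :=
        (mul_eq_zero.mp h1.symm).resolve_left (inv_pos.mpr (hppos b hb k)).ne'
      exact (mul_eq_zero.mp h2).resolve_right (mul_pos (hppos b hb _) (hb h)).ne'
    intro i'
    by_cases e : i' = j
    · subst e
      have hs := hNstoch b hb h
      rw [Finset.sum_eq_single i' (fun k _ hk => hzero k hk) (by simp)] at hs
      simp [hs]
    · simp [e, hzero i' e]
  refine ⟨P1, ?_⟩
  -- Part (2)
  intro i b hb h hind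
  have hpure_ex : ∀ j : Fin m, N b j h ≠ 0 → ∃ h', M.IsPureIJIndex i j h' := by
    intro j hj
    obtain ⟨a', hval', htr⟩ := key b hb h
    have hNj : 0 < N b j h := lt_of_le_of_ne (hNpos b hb j h) (Ne.symm hj)
    have hpos : 0 < M.trade (b h • M.unit h) b j := by
      rw [keyN b hb h j]
      exact mul_pos (inv_pos.mpr (hppos b hb j))
        (mul_pos hNj (mul_pos (hppos b hb _) (hb h)))
    rw [htr j] at hpos
    have hcpos : 0 < (if j = M.ind h then b h else 1) := by
      split
      · exact hb h
      · exact one_pos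
    have hretpos : 0 < M.ret (M.unit h) a' j := by
      by_contra hr
      push_neg at hr
      nlinarith
    exact hFlex i j ⟨h, hind, a', hval', hretpos⟩
  set c : Fin m → M.K := fun j => if hj : N b j h ≠ 0 then (hpure_ex j hj).choose else h
    with hcdef
  have hc : ∀ j (hj : N b j h ≠ 0), M.IsPureIJIndex i j (c j) := by
    intro j hj
    simp only [hcdef, dif_pos hj]
    exact (hpure_ex j hj).choose_spec
  refine ⟨fun h' => ∑ j : Fin m, if N b j h ≠ 0 ∧ c j = h' then N b j h else 0, ?_, ?_⟩
  · intro h' hne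
    obtain ⟨j, -, hj⟩ := Finset.exists_ne_zero_of_sum_ne_zero hne
    by_cases hcond : N b j h ≠ 0 ∧ c j = h'
    · obtain ⟨hj0, hch⟩ := hcond
      have hp := hc j hj0
      rw [hch] at hp
      exact ⟨hp.1.1, j, hp⟩
    · rw [if_neg hcond] at hj
      exact absurd rfl hj
  · intro i'
    have step : ∀ j : Fin m,
        (∑ h' : M.K, if N b j h ≠ 0 ∧ c j = h' then N b j h * N b i' h' else 0) =
          if i' = j then N b i' h else 0 := by
      intro j
      by_cases hj : N b j h ≠ 0
      · rw [Finset.sum_eq_single (c j)]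
        · rw [if_pos ⟨hj, rfl⟩, P1 i j (c j) (hc j hj) b hb i']
          by_cases e : i' = j <;> simp [e]
        · intro h' _ hne
          rw [if_neg (fun hco => hne hco.2.symm)]
        · simp
      · push_neg at hj
        by_cases e : i' = j <;> simp [hj, e]
    have main : (∑ h' : M.K,
        (∑ j : Fin m, if N b j h ≠ 0 ∧ c j = h' then N b j h else 0) * N b i' h')
        = N b i' h := by
      simp_rw [Finset.sum_mul, ite_mul, zero_mul]
      rw [Finset.sum_comm, Finset.sum_congr rfl fun j _ => step j]
      simp
    exact main.symm
end
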